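/- arXiv:1302.7208 — 7 statements merged into one kernel-verified Lean document; each statement's English description precedes it below -/
import Mathlib

section
/- If ν ≤ 1 and x > 0, then the incomplete gamma function satisfies (1 + x)^{ν−1} e^{−x} ≤ Γ(ν, x) ≤ x^{ν−1} e^{−x}. -/
open Real Set MeasureTheory Filter

-- Bernoulli-based key inequality
lemma key_ineq {s t : ℝ} (hs : 0 ≤ s) (ht : 0 < t) :
    t ^ s * (t + 1 + s) ≤ (1 + t) ^ (1 + s) := by
  have h1t : (0:ℝ) < 1 + t := by linarith
  have h0 : (0:ℝ) < 1 / t := by positivity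
  have hb : 1 + (1 + s) * (1 / t) ≤ (1 + 1 / t) ^ (1 + s) :=
    one_add_mul_self_le_rpow_one_add (by linarith) (by linarith)
  have hsplit : (1 + t) ^ (1 + s) = t ^ (1 + s) * (1 + 1 / t) ^ (1 + s) := by
    rw [← Real.mul_rpow ht.le (by positivity)]
    congr 1
    field_simp
    ring
  rw [hsplit]
  have ht1 : t ^ (1 + s) = t * t ^ s := by
    rw [Real.rpow_add ht, Real.rpow_one]
  calc t ^ s * (t + 1 + s) = t ^ (1 + s) * (1 + (1 + s) * (1 / t)) := by
        rw [ht1]; field_simp; ring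
    _ ≤ t ^ (1 + s) * (1 + 1 / t) ^ (1 + s) :=
        mul_le_mul_of_nonneg_left hb (by positivity)

lemma pointwise_ineq {ν t : ℝ} (hν : ν ≤ 1) (ht : 0 < t) :
    (1 + t) ^ (ν - 1) + (1 - ν) * (1 + t) ^ (ν - 2) ≤ t ^ (ν - 1) := by
  set s : ℝ := 1 - ν with hsdef
  have hs : 0 ≤ s := by simp only [hsdef]; linarith
  have h1t : (0:ℝ) < 1 + t := by linarith
  have key := key_ineq hs ht
  have hA : (0:ℝ) < (1 + t) ^ (1 + s) := Real.rpow_pos_of_pos h1t _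
  have hB : (0:ℝ) < t ^ s := Real.rpow_pos_of_pos ht _
  have hC : (0:ℝ) < (1 + t) ^ s := Real.rpow_pos_of_pos h1t _
  have hν1 : ν - 1 = -s := by simp [hsdef]
  have hν2 : ν - 2 = -(1 + s) := by simp [hsdef]; ring
  have expand : (1 + t) ^ (1 + s) = (1 + t) * (1 + t) ^ s := by
    rw [Real.rpow_add h1t, Real.rpow_one]
  rw [hν1, hν2, Real.rpow_neg h1t.le, Real.rpow_neg h1t.le, Real.rpow_neg ht.le]
  have step : ((1 + t) ^ s)⁻¹ + s * ((1 + t) ^ (1 + s))⁻¹ = (t + 1 + s) / (1 + t) ^ (1 + s) := by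
    rw [expand]
    field_simp
    ring
  rw [step, inv_eq_one_div, div_le_div_iff₀ hA hB]
  nlinarith [key]

noncomputable def incGamma (ν x : ℝ) : ℝ := ∫ t in Set.Ioi x, t ^ (ν - 1) * Real.exp (-t)

theorem incGamma_bounds (ν x : ℝ) (hν : ν ≤ 1) (hx : 0 < x) :
    (1 + x) ^ (ν - 1) * Real.exp (-x) ≤ incGamma ν x ∧
    incGamma ν x ≤ x ^ (ν - 1) * Real.exp (-x) := by
  have hxν : (0:ℝ) < x ^ (ν - 1) := Real.rpow_pos_of_pos hx _
  -- continuity of the integrand on Ioi x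
  have hfc : ContinuousOn (fun t : ℝ => t ^ (ν - 1) * Real.exp (-t)) (Set.Ioi x) := by
    apply ContinuousOn.mul
    · intro t ht
      exact ((Real.continuousAt_rpow_const t (ν - 1)
        (Or.inl (ne_of_gt (lt_trans hx ht)))).continuousWithinAt)
    · exact (Real.continuous_exp.comp continuous_neg).continuousOn
  have hfm : MeasureTheory.AEStronglyMeasurable (fun t : ℝ => t ^ (ν - 1) * Real.exp (-t))
      (MeasureTheory.volume.restrict (Set.Ioi x)) :=
    hfc.aestronglyMeasurable measurableSet_Ioi
  -- integrability of the exponential bound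
  have hexpint : MeasureTheory.IntegrableOn (fun t : ℝ => Real.exp (-t)) (Set.Ioi x) := by
    simpa using exp_neg_integrableOn_Ioi x one_pos
  have hgint : MeasureTheory.IntegrableOn (fun t : ℝ => x ^ (ν - 1) * Real.exp (-t))
      (Set.Ioi x) := hexpint.const_mul _
  -- pointwise bound f t ≤ x^(ν-1) exp(-t) on Ioi x
  have hfle : ∀ t ∈ Set.Ioi x, t ^ (ν - 1) * Real.exp (-t) ≤ x ^ (ν - 1) * Real.exp (-t) := by
    intro t ht
    have : t ^ (ν - 1) ≤ x ^ (ν - 1) :=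
      Real.rpow_le_rpow_of_nonpos hx (le_of_lt ht) (by linarith)
    exact mul_le_mul_of_nonneg_right this (Real.exp_pos _).le
  -- integrability of f
  have hfint : MeasureTheory.IntegrableOn (fun t : ℝ => t ^ (ν - 1) * Real.exp (-t))
      (Set.Ioi x) := by
    apply hgint.mono' hfm
    filter_upwards [MeasureTheory.ae_restrict_mem measurableSet_Ioi] with t ht
    have htp : 0 < t := lt_trans hx ht
    rw [Real.norm_eq_abs, abs_of_nonneg (by positivity)]
    exact hfle t ht
  -- the exponential integral
  have hexpval : ∫ t in Set.Ioi x, Real.exp (-t) = Real.exp (-x) := by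
    have := MeasureTheory.integral_Ioi_of_hasDerivAt_of_tendsto'
      (f := fun t : ℝ => -Real.exp (-t)) (f' := fun t : ℝ => Real.exp (-t)) (a := x) (m := 0)
      (fun t _ => (((hasDerivAt_neg t).exp).neg).congr_deriv (by simp))
      hexpint
      (by simpa using (Real.tendsto_exp_neg_atTop_nhds_zero).neg)
    simpa using this
  constructor
  · -- lower bound
    set G : ℝ → ℝ := fun t => (1 + t) ^ (ν - 1) * Real.exp (-t) with hG
    set g' : ℝ → ℝ := fun t =>
      ((ν - 1) * (1 + t) ^ (ν - 2) - (1 + t) ^ (ν - 1)) * Real.exp (-t) with hg'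
    have hderiv : ∀ t ∈ Set.Ici x, HasDerivAt G (g' t) t := by
      intro t ht
      have h1t : (0:ℝ) < 1 + t := by have := ht.out; linarith
      have h1 : HasDerivAt (fun t : ℝ => (1 + t) ^ (ν - 1))
          ((ν - 1) * (1 + t) ^ (ν - 2)) t := by
        have h := (Real.hasDerivAt_rpow_const (x := 1 + t) (p := ν - 1)
          (Or.inl h1t.ne')).comp t ((hasDerivAt_id t).const_add 1)
        simp only [Function.comp_def, mul_one, id_eq] at h
        exact h.congr_deriv (by ring_nf)
      have h2 : HasDerivAt (fun t : ℝ => Real.exp (-t)) (-Real.exp (-t)) t := by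
        simpa using (hasDerivAt_neg t).exp
      have := h1.mul h2
      simp only [hG, hg']
      exact this.congr_deriv (by ring)
    -- bound on -g'
    have hg'le : ∀ t ∈ Set.Ioi x, -g' t ≤ t ^ (ν - 1) * Real.exp (-t) := by
      intro t ht
      have htpos : 0 < t := lt_trans hx ht
      have hp := pointwise_ineq hν htpos
      have : -g' t = ((1 + t) ^ (ν - 1) + (1 - ν) * (1 + t) ^ (ν - 2)) * Real.exp (-t) := by
        simp only [hg']; ring
      rw [this]
      exact mul_le_mul_of_nonneg_right hp (Real.exp_pos _).le
    have hg'nonneg : ∀ t ∈ Set.Ioi x, 0 ≤ -g' t := by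
      intro t ht
      have htpos : 0 < t := lt_trans hx ht
      have h1t : (0:ℝ) < 1 + t := by linarith
      have : -g' t = ((1 + t) ^ (ν - 1) + (1 - ν) * (1 + t) ^ (ν - 2)) * Real.exp (-t) := by
        simp only [hg']; ring
      rw [this]
      have h1 : (0:ℝ) ≤ (1 + t) ^ (ν - 1) := (Real.rpow_pos_of_pos h1t _).le
      have h2 : (0:ℝ) ≤ (1 - ν) * (1 + t) ^ (ν - 2) := by
        have := (Real.rpow_pos_of_pos h1t (ν - 2)).le
        nlinarith
      positivity
    -- measurability of g'
    have hg'c : ContinuousOn g' (Set.Ioi x) := by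
      apply ContinuousOn.mul
      · apply ContinuousOn.sub
        · apply ContinuousOn.mul continuousOn_const
          intro t ht
          have h1t : (0:ℝ) < 1 + t := by have := lt_trans hx ht; linarith
          exact ((Real.continuousAt_rpow_const (1 + t) (ν - 2)
            (Or.inl h1t.ne')).comp (by continuity : Continuous fun t : ℝ => 1 + t).continuousAt).continuousWithinAt
        · intro t ht
          have h1t : (0:ℝ) < 1 + t := by have := lt_trans hx ht; linarith
          exact ((Real.continuousAt_rpow_const (1 + t) (ν - 1)
            (Or.inl h1t.ne')).comp (by continuity : Continuous fun t : ℝ => 1 + t).continuousAt).continuousWithinAt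
      · exact (Real.continuous_exp.comp continuous_neg).continuousOn
    have hg'int : MeasureTheory.IntegrableOn g' (Set.Ioi x) := by
      apply hfint.mono' (hg'c.aestronglyMeasurable measurableSet_Ioi)
      filter_upwards [MeasureTheory.ae_restrict_mem measurableSet_Ioi] with t ht
      rw [Real.norm_eq_abs, abs_of_nonpos (by linarith [hg'nonneg t ht])]
      exact hg'le t ht
    -- G tends to 0
    have hGtend : Filter.Tendsto G Filter.atTop (nhds 0) := by
      apply squeeze_zero_norm' _ Real.tendsto_exp_neg_atTop_nhds_zero
      filter_upwards [Filter.eventually_ge_atTop (0:ℝ)] with t ht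
      have h1t : (1:ℝ) ≤ 1 + t := by linarith
      have hb : (1 + t) ^ (ν - 1) ≤ 1 :=
        Real.rpow_le_one_of_one_le_of_nonpos h1t (by linarith)
      rw [Real.norm_eq_abs, abs_of_nonneg (by positivity)]
      calc (1 + t) ^ (ν - 1) * Real.exp (-t) ≤ 1 * Real.exp (-t) :=
            mul_le_mul_of_nonneg_right hb (Real.exp_pos _).le
        _ = Real.exp (-t) := one_mul _
    have hFTC : ∫ t in Set.Ioi x, g' t = 0 - G x :=
      MeasureTheory.integral_Ioi_of_hasDerivAt_of_tendsto' hderiv hg'int hGtend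
    have : G x = ∫ t in Set.Ioi x, -g' t := by
      rw [MeasureTheory.integral_neg, hFTC]; ring
    rw [show (1 + x) ^ (ν - 1) * Real.exp (-x) = G x from rfl, this]
    apply MeasureTheory.setIntegral_mono_on hg'int.neg hfint measurableSet_Ioi
    exact hg'le
  · -- upper bound
    unfold incGamma
    calc (∫ t in Set.Ioi x, t ^ (ν - 1) * Real.exp (-t))
        ≤ ∫ t in Set.Ioi x, x ^ (ν - 1) * Real.exp (-t) :=
          MeasureTheory.setIntegral_mono_on hfint hgint measurableSet_Ioi hfle
      _ = x ^ (ν - 1) * Real.exp (-x) := by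
          rw [MeasureTheory.integral_const_mul, hexpval]
end

section
/- For x > 0 and ν < 1, x^ν e^{−x}/(x + 1 − ν) < Γ(ν, x) < x^{ν−3} e^{−x} (x² + (ν−1)x + (ν−1)(ν−2)). -/
open MeasureTheory Real Set Filter

/-- Integrability of `t ^ s * exp (-t)` on `(x, ∞)` for `x > 0` and `s ≤ 0`. -/
lemma aux_integrableOn_rpow_exp {s x : ℝ} (hs : s ≤ 0) (hx : 0 < x) :
    IntegrableOn (fun t => t ^ s * Real.exp (-t)) (Set.Ioi x) := by
  apply Integrable.mono' (g := fun t => x ^ s * Real.exp (-t))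
  · exact ((exp_neg_integrableOn_Ioi x one_pos).congr_fun
      (fun t _ => by simp) measurableSet_Ioi).const_mul _
  · apply ContinuousOn.aestronglyMeasurable _ measurableSet_Ioi
    intro t ht
    exact ((Real.continuousAt_rpow_const t s (Or.inl (hx.trans ht).ne')).continuousWithinAt).mul
      (Real.continuous_exp.comp continuous_neg).continuousWithinAt
  · filter_upwards [ae_restrict_mem measurableSet_Ioi] with t ht
    have ht0 : 0 < t := hx.trans ht
    rw [Real.norm_of_nonneg (by positivity)]
    have h1 : t ^ s ≤ x ^ s := Real.rpow_le_rpow_of_nonpos hx (le_of_lt ht) hs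
    exact mul_le_mul_of_nonneg_right h1 (Real.exp_pos _).le

lemma aux_tendsto_rpow_exp (s : ℝ) :
    Tendsto (fun t : ℝ => t ^ s * Real.exp (-t)) atTop (nhds 0) := by
  have := tendsto_rpow_mul_exp_neg_mul_atTop_nhds_zero s 1 one_pos
  simpa using this

/-- Positivity of an integral of an a.e. positive integrable function over `Ioi x`. -/
lemma aux_integral_pos {x : ℝ} {h : ℝ → ℝ} (hint : IntegrableOn h (Set.Ioi x))
    (hpos : ∀ t ∈ Set.Ioi x, 0 < h t) : 0 < ∫ t in Set.Ioi x, h t := by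
  rw [setIntegral_pos_iff_support_of_nonneg_ae _ hint]
  · have hsub : Set.Ioi x ⊆ Function.support h ∩ Set.Ioi x := fun t ht =>
      ⟨fun h0 => (hpos t ht).ne' h0, ht⟩
    refine lt_of_lt_of_le ?_ (measure_mono hsub)
    simp [Real.volume_Ioi]
  · filter_upwards [ae_restrict_mem measurableSet_Ioi] with t ht
    exact (hpos t ht).le

theorem incGamma_strict_bounds (ν x : ℝ) (hν : ν < 1) (hx : 0 < x) :
    x ^ ν * Real.exp (-x) / (x + 1 - ν) < incGamma ν x ∧
    incGamma ν x < x ^ (ν - 3) * Real.exp (-x) * (x ^ 2 + (ν - 1) * x + (ν - 1) * (ν - 2)) := by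
  have hf_int : IntegrableOn (fun t => t ^ (ν - 1) * Real.exp (-t)) (Set.Ioi x) :=
    aux_integrableOn_rpow_exp (by linarith) hx
  -- exp(-t) has derivative -exp(-t)
  have hexp : ∀ t : ℝ, HasDerivAt (fun u => Real.exp (-u)) (-Real.exp (-t)) t := by
    intro t
    simpa [Function.comp_def] using ((Real.hasDerivAt_exp (-t)).comp t ((hasDerivAt_id t).neg))
  constructor
  · -- Lower bound.
    set F : ℝ → ℝ := fun t => t ^ ν * Real.exp (-t) / (t + 1 - ν) with hF
    set F' : ℝ → ℝ := fun t =>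
      (1 - ν) * (t ^ (ν - 1) * Real.exp (-t)) / (t + 1 - ν) ^ 2
        - t ^ (ν - 1) * Real.exp (-t) with hF'
    have hD : ∀ t : ℝ, x ≤ t → 0 < t + 1 - ν := fun t ht => by linarith
    have hderiv : ∀ t ∈ Set.Ici x, HasDerivAt F (F' t) t := by
      intro t ht
      have ht0 : 0 < t := lt_of_lt_of_le hx ht
      have hDt : t + 1 - ν ≠ 0 := (hD t ht).ne'
      have hnum : HasDerivAt (fun u : ℝ => u ^ ν * Real.exp (-u))
          (ν * t ^ (ν - 1) * Real.exp (-t) + t ^ ν * (-Real.exp (-t))) t :=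
        (Real.hasDerivAt_rpow_const (Or.inl ht0.ne')).mul (hexp t)
      have hden : HasDerivAt (fun u : ℝ => u + 1 - ν) 1 t := by
        simpa using ((hasDerivAt_id t).add_const 1).sub_const ν
      have := hnum.div hden hDt
      refine this.congr_deriv ?_
      have htν : t ^ ν = t ^ (ν - 1) * t := by
        rw [Real.rpow_sub_one ht0.ne', div_mul_cancel₀ _ ht0.ne']
      simp only [hF']
      rw [htν]
      field_simp
      ring
    have hF'int : IntegrableOn F' (Set.Ioi x) := by
      apply Integrable.sub _ hf_int
      apply Integrable.mono' (hf_int.const_mul ((1 - ν) / (1 - ν) ^ 2))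
      · apply ContinuousOn.aestronglyMeasurable _ measurableSet_Ioi
        intro t ht
        have ht0 : 0 < t := hx.trans ht
        exact (continuousWithinAt_const.mul
          (((Real.continuousAt_rpow_const t (ν - 1) (Or.inl ht0.ne')).continuousWithinAt).mul
            (Real.continuous_exp.comp continuous_neg).continuousWithinAt)).div
          ((continuous_pow 2).comp (by continuity)).continuousWithinAt
          (pow_ne_zero 2 (hD t (le_of_lt ht)).ne')
      · filter_upwards [ae_restrict_mem measurableSet_Ioi] with t ht
        have ht0 : 0 < t := hx.trans ht
        have hDt : 0 < t + 1 - ν := hD t (le_of_lt ht)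
        have h1ν : 0 < 1 - ν := by linarith
        have hsq : (1 - ν) ^ 2 ≤ (t + 1 - ν) ^ 2 := by nlinarith
        rw [Real.norm_of_nonneg (by positivity),
          show (1 - ν) / (1 - ν) ^ 2 * (t ^ (ν - 1) * Real.exp (-t))
            = (1 - ν) * (t ^ (ν - 1) * Real.exp (-t)) / (1 - ν) ^ 2 by ring]
        exact div_le_div_of_nonneg_left (by positivity) (by positivity) hsq
    have hFtend : Tendsto F atTop (nhds 0) := by
      have h2 : Tendsto (fun t : ℝ => t + 1 - ν) atTop atTop :=
        Tendsto.congr (fun t => by simp only [id_eq]; ring)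
          (tendsto_atTop_add_const_right atTop (1 - ν) tendsto_id)
      have h3 := (aux_tendsto_rpow_exp ν).mul (tendsto_inv_atTop_zero.comp h2)
      rw [mul_zero] at h3
      exact h3.congr fun t => by simp [hF, Function.comp, div_eq_mul_inv]
    have key : ∫ t in Set.Ioi x, F' t = 0 - F x :=
      integral_Ioi_of_hasDerivAt_of_tendsto
        ((hderiv x self_mem_Ici).continuousAt.continuousWithinAt)
        (fun t ht => hderiv t (mem_Ici.mpr (le_of_lt ht))) hF'int hFtend
    have hsum : incGamma ν x = (∫ t in Set.Ioi x,
        (t ^ (ν - 1) * Real.exp (-t) + F' t)) - ∫ t in Set.Ioi x, F' t := by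
      rw [integral_add hf_int hF'int]; simp only [incGamma]; ring
    have hpos : 0 < ∫ t in Set.Ioi x, (t ^ (ν - 1) * Real.exp (-t) + F' t) := by
      apply aux_integral_pos (hf_int.add hF'int)
      intro t ht
      simp only [Pi.add_apply]
      have ht0 : 0 < t := hx.trans ht
      have hDt : 0 < t + 1 - ν := hD t (le_of_lt ht)
      have : t ^ (ν - 1) * Real.exp (-t) + F' t
          = (1 - ν) * (t ^ (ν - 1) * Real.exp (-t)) / (t + 1 - ν) ^ 2 := by
        simp only [hF']; ring
      rw [this]
      have h1ν : 0 < 1 - ν := by linarith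
      positivity
    have : F x < incGamma ν x := by
      rw [hsum, key]
      linarith
    simpa [hF] using this
  · -- Upper bound.
    set G : ℝ → ℝ := fun t => Real.exp (-t) *
      (t ^ (ν - 1) + (ν - 1) * t ^ (ν - 2) + (ν - 1) * (ν - 2) * t ^ (ν - 3)) with hG
    set G' : ℝ → ℝ := fun t => Real.exp (-t) *
      ((ν - 1) * (ν - 2) * (ν - 3) * t ^ (ν - 4) - t ^ (ν - 1)) with hG'
    have hderiv : ∀ t ∈ Set.Ici x, HasDerivAt G (G' t) t := by
      intro t ht
      have ht0 : 0 < t := lt_of_lt_of_le hx ht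
      have h1 : HasDerivAt (fun u : ℝ => u ^ (ν - 1) + (ν - 1) * u ^ (ν - 2)
          + (ν - 1) * (ν - 2) * u ^ (ν - 3))
          ((ν - 1) * t ^ (ν - 1 - 1) + (ν - 1) * ((ν - 2) * t ^ (ν - 2 - 1))
            + (ν - 1) * (ν - 2) * ((ν - 3) * t ^ (ν - 3 - 1))) t := by
        exact ((Real.hasDerivAt_rpow_const (Or.inl ht0.ne')).add
          ((Real.hasDerivAt_rpow_const (Or.inl ht0.ne')).const_mul _)).add
          ((Real.hasDerivAt_rpow_const (Or.inl ht0.ne')).const_mul _)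
      have := (hexp t).mul h1
      refine this.congr_deriv ?_
      rw [hG', show ν - 1 - 1 = ν - 2 by ring, show ν - 2 - 1 = ν - 3 by ring,
        show ν - 3 - 1 = ν - 4 by ring]
      ring
    have hG'int : IntegrableOn G' (Set.Ioi x) := by
      have h4 : IntegrableOn (fun t => t ^ (ν - 4) * Real.exp (-t)) (Set.Ioi x) :=
        aux_integrableOn_rpow_exp (by linarith) hx
      have : G' = fun t => (ν - 1) * (ν - 2) * (ν - 3) * (t ^ (ν - 4) * Real.exp (-t))
          - t ^ (ν - 1) * Real.exp (-t) := by
        funext t; rw [hG']; ring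
      rw [this]
      exact (h4.const_mul _).sub hf_int
    have hGtend : Tendsto G atTop (nhds 0) := by
      have := ((aux_tendsto_rpow_exp (ν - 1)).add
        ((aux_tendsto_rpow_exp (ν - 2)).const_mul (ν - 1))).add
        ((aux_tendsto_rpow_exp (ν - 3)).const_mul ((ν - 1) * (ν - 2)))
      simp only [add_zero, mul_zero] at this
      apply this.congr
      intro t; rw [hG]; ring
    have key : ∫ t in Set.Ioi x, G' t = 0 - G x :=
      integral_Ioi_of_hasDerivAt_of_tendsto
        ((hderiv x self_mem_Ici).continuousAt.continuousWithinAt)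
        (fun t ht => hderiv t (mem_Ici.mpr (le_of_lt ht))) hG'int hGtend
    have hsum : incGamma ν x = (∫ t in Set.Ioi x,
        (t ^ (ν - 1) * Real.exp (-t) + G' t)) - ∫ t in Set.Ioi x, G' t := by
      rw [integral_add hf_int hG'int]; simp only [incGamma]; ring
    have hneg : ∫ t in Set.Ioi x, (t ^ (ν - 1) * Real.exp (-t) + G' t) < 0 := by
      have := aux_integral_pos (h := fun t => -(t ^ (ν - 1) * Real.exp (-t) + G' t))
        ((hf_int.add hG'int).neg) ?_
      · rw [integral_neg] at this; linarith
      · intro t ht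
        show 0 < -(t ^ (ν - 1) * Real.exp (-t) + G' t)
        have ht0 : 0 < t := hx.trans ht
        have h1 : t ^ (ν - 1) * Real.exp (-t) + G' t
            = (ν - 1) * (ν - 2) * (ν - 3) * (t ^ (ν - 4) * Real.exp (-t)) := by
          simp only [hG']; ring
        rw [h1]
        have hc : (ν - 1) * (ν - 2) * (ν - 3) < 0 :=
          mul_neg_of_pos_of_neg
            (mul_pos_of_neg_of_neg (by linarith) (by linarith)) (by linarith)
        have hp : 0 < t ^ (ν - 4) * Real.exp (-t) := by positivity
        nlinarith
    have hGx : incGamma ν x < G x := by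
      rw [hsum, key]; linarith
    have hGeq : G x = x ^ (ν - 3) * Real.exp (-x)
        * (x ^ 2 + (ν - 1) * x + (ν - 1) * (ν - 2)) := by
      simp only [hG]
      have h1 : x ^ (ν - 1) = x ^ (ν - 3) * x ^ 2 := by
        rw [← Real.rpow_natCast x 2, ← Real.rpow_add hx]
        congr 1
        push_cast
        ring
      have h2 : x ^ (ν - 2) = x ^ (ν - 3) * x := by
        rw [show ν - 2 = ν - 3 + 1 by ring, Real.rpow_add_one hx.ne']
      rw [h1, h2]; ring
    rw [← hGeq]; exact hGx
end

section
/- For z > 0, K_1(z) = (1/2)∫_0^∞ exp(−(z/2)(t + 1/t)) dt satisfies K_1(z) ≤ √(π/(2z)) e^{−z} (1 + 3/(8z)). -/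
open Real

noncomputable def besselK (ν z x : ℝ) : ℝ :=
  (1 / 2) * ∫ t in Set.Ioi x, t ^ (ν - 1) * Real.exp (-(z / 2) * (t + 1 / t))

section Aux
open MeasureTheory Set

namespace BesselAux

noncomputable def aa (s : ℝ) : ℝ := (s + Real.sqrt (s ^ 2 + 4)) / 2

lemma sqrt_gt_abs (s : ℝ) : |s| < Real.sqrt (s ^ 2 + 4) := by
  rw [← Real.sqrt_sq_eq_abs]
  exact Real.sqrt_lt_sqrt (sq_nonneg s) (by linarith)

lemma aa_pos (s : ℝ) : 0 < aa s := by
  have h1 := sqrt_gt_abs s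
  have h2 : -s ≤ |s| := neg_le_abs s
  unfold aa; linarith

lemma aa_sq (s : ℝ) : aa s ^ 2 = s * aa s + 1 := by
  have h : Real.sqrt (s ^ 2 + 4) ^ 2 = s ^ 2 + 4 := Real.sq_sqrt (by positivity)
  unfold aa; nlinarith [h]

lemma aa_sub (s : ℝ) : aa s - (aa s)⁻¹ = s := by
  have h := aa_sq s
  have hp := (aa_pos s).ne'
  field_simp
  nlinarith [h]

lemma aa_neg (s : ℝ) : aa (-s) = (aa s)⁻¹ := by
  have h2 : Real.sqrt (s ^ 2 + 4) ^ 2 = s ^ 2 + 4 := Real.sq_sqrt (by positivity)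
  have h1 : aa (-s) * aa s = 1 := by
    unfold aa
    rw [neg_sq]
    nlinarith [h2]
  exact eq_inv_of_mul_eq_one_left h1

lemma aa_eq (t : ℝ) (ht : 0 < t) : aa (Real.sqrt t - (Real.sqrt t)⁻¹) = Real.sqrt t := by
  have hst : 0 < Real.sqrt t := Real.sqrt_pos.mpr ht
  have key : (Real.sqrt t - (Real.sqrt t)⁻¹) ^ 2 + 4 = (Real.sqrt t + (Real.sqrt t)⁻¹) ^ 2 := by
    field_simp; ring
  unfold aa
  rw [key, Real.sqrt_sq (by positivity)]
  ring

lemma aa_continuous : Continuous aa := by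
  unfold aa; fun_prop

noncomputable def hh (s : ℝ) : ℝ := 2 * aa s ^ 3 / (aa s ^ 2 + 1)

lemma hh_nonneg (s : ℝ) : 0 ≤ hh s := by
  have := aa_pos s; unfold hh; positivity

lemma hh_continuous : Continuous hh := by
  unfold hh
  apply Continuous.div (by exact continuous_const.mul (aa_continuous.pow 3)) (by exact (aa_continuous.pow 2).add continuous_const) (fun s => by nlinarith [sq_nonneg (aa s)])

lemma hh_le (s : ℝ) : hh s ≤ 2 * |s| + 2 := by
  have ha := aa_pos s
  have h1 : aa s ≤ |s| + 1 := by
    have : Real.sqrt (s ^ 2 + 4) ≤ |s| + 2 := by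
      rw [show |s| + 2 = Real.sqrt ((|s| + 2) ^ 2) from (Real.sqrt_sq (by positivity)).symm]
      apply Real.sqrt_le_sqrt
      nlinarith [abs_nonneg s, sq_abs s]
    unfold aa
    have : -s ≤ |s| := neg_le_abs s
    have h3 : s ≤ |s| := le_abs_self s
    linarith
  have h2 : hh s ≤ 2 * aa s := by
    unfold hh
    rw [div_le_iff₀ (by positivity)]
    nlinarith
  linarith

lemma hh_add (s : ℝ) : hh s + hh (-s) ≤ 2 + (3 / 4) * s ^ 2 := by
  have ha := aa_pos s
  set a := aa s with hadef
  have hsub : a - a⁻¹ = s := aa_sub s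
  have hne : a ≠ 0 := ha.ne'
  have main : 2 + (3 / 4) * s ^ 2 - (hh s + hh (-s)) =
      ((a - 1) ^ 4 * (3 * a ^ 2 + 4 * a + 3)) / (4 * a ^ 2 * (a ^ 2 + 1)) := by
    unfold hh
    rw [aa_neg, ← hadef, ← hsub]
    have h1 : (0:ℝ) < a ^ 2 + 1 := by positivity
    field_simp
    ring
  have hpos : 0 ≤ ((a - 1) ^ 4 * (3 * a ^ 2 + 4 * a + 3)) / (4 * a ^ 2 * (a ^ 2 + 1)) := by
    positivity
  linarith

noncomputable def psi (t : ℝ) : ℝ := Real.sqrt t - (Real.sqrt t)⁻¹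

lemma psi_hasDerivAt {t : ℝ} (ht : 0 < t) :
    HasDerivAt psi ((t + 1) / (2 * t * Real.sqrt t)) t := by
  have hst : 0 < Real.sqrt t := Real.sqrt_pos.mpr ht
  have hs := Real.hasDerivAt_sqrt ht.ne'
  have hinv := hs.inv hst.ne'
  have h := hs.sub hinv
  have heq : 1 / (2 * Real.sqrt t) - -(1 / (2 * Real.sqrt t)) / Real.sqrt t ^ 2
      = (t + 1) / (2 * t * Real.sqrt t) := by
    rw [Real.sq_sqrt ht.le]
    rw [div_sub_div _ _ (by positivity : (2 * Real.sqrt t) ≠ 0) ht.ne',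
      div_eq_div_iff (by positivity) (by positivity)]
    field_simp
    ring
  rw [heq] at h
  exact h
lemma psi_injOn : InjOn psi (Ioi (0:ℝ)) := by
  intro t1 h1 t2 h2 h
  have e1 := aa_eq t1 h1
  have e2 := aa_eq t2 h2
  have hs : Real.sqrt t1 = Real.sqrt t2 := by
    rw [← e1, ← e2]
    unfold psi at h
    rw [h]
  exact (Real.sqrt_inj (le_of_lt h1) (le_of_lt h2)).mp hs

lemma psi_image : psi '' (Ioi (0:ℝ)) = univ := by
  apply eq_univ_of_forall
  intro s
  refine ⟨(aa s) ^ 2, by have := aa_pos s; exact mem_Ioi.mpr (by positivity), ?_⟩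
  unfold psi
  rw [Real.sqrt_sq (aa_pos s).le]
  exact aa_sub s

lemma psi_pointwise {z t : ℝ} (ht : 0 < t) :
    |(t + 1) / (2 * t * Real.sqrt t)| •
        (Real.exp (-(z / 2) * (psi t ^ 2 + 2)) * hh (psi t)) =
      Real.exp (-(z / 2) * (t + 1 / t)) := by
  have hst : 0 < Real.sqrt t := Real.sqrt_pos.mpr ht
  have hsq : Real.sqrt t ^ 2 = t := Real.sq_sqrt ht.le
  have habs : |(t + 1) / (2 * t * Real.sqrt t)| = (t + 1) / (2 * t * Real.sqrt t) :=
    abs_of_pos (by positivity)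
  have harg : psi t ^ 2 + 2 = t + 1 / t := by
    unfold psi
    rw [sub_sq, hsq, inv_pow, hsq]
    field_simp
    ring
  have hhh : hh (psi t) = 2 * (t * Real.sqrt t) / (t + 1) := by
    unfold hh psi
    rw [aa_eq t ht, pow_succ, hsq]
  rw [habs, harg, hhh, smul_eq_mul]
  field_simp

lemma subst_eq (z : ℝ) :
    (∫ s : ℝ, Real.exp (-(z / 2) * (s ^ 2 + 2)) * hh s) =
      ∫ t in Ioi (0:ℝ), Real.exp (-(z / 2) * (t + 1 / t)) := by
  have h := integral_image_eq_integral_abs_deriv_smul (f := psi)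
      (f' := fun t => (t + 1) / (2 * t * Real.sqrt t)) measurableSet_Ioi
      (fun t ht => (psi_hasDerivAt (mem_Ioi.mp ht)).hasDerivWithinAt)
      psi_injOn (fun s => Real.exp (-(z / 2) * (s ^ 2 + 2)) * hh s)
  rw [psi_image, Measure.restrict_univ] at h
  rw [h]
  exact setIntegral_congr_fun measurableSet_Ioi fun t ht => psi_pointwise (mem_Ioi.mp ht)

lemma G_continuous (z : ℝ) :
    Continuous (fun s : ℝ => Real.exp (-(z / 2) * (s ^ 2 + 2)) * hh s) := by
  apply Continuous.mul _ hh_continuous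
  exact Real.continuous_exp.comp ((continuous_const.mul ((continuous_pow 2).add
    continuous_const)))

lemma exp_split (z s : ℝ) :
    Real.exp (-(z / 2) * (s ^ 2 + 2)) = Real.exp (-(z / 2) * s ^ 2) * Real.exp (-z) := by
  rw [← Real.exp_add]
  ring_nf

lemma abs_mul_exp_integrable {b : ℝ} (hb : 0 < b) :
    Integrable (fun s : ℝ => |s| * Real.exp (-b * s ^ 2)) := by
  have h0 := (integrable_mul_exp_neg_mul_sq hb).abs
  apply h0.congr
  filter_upwards with s
  rw [abs_mul, abs_of_pos (Real.exp_pos _)]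

lemma G_integrable {z : ℝ} (hz : 0 < z) :
    Integrable (fun s : ℝ => Real.exp (-(z / 2) * (s ^ 2 + 2)) * hh s) := by
  have hb : 0 < z / 2 := by linarith
  have hdom : Integrable (fun s : ℝ => 2 * Real.exp (-z) * (|s| * Real.exp (-(z / 2) * s ^ 2))
      + 2 * Real.exp (-z) * Real.exp (-(z / 2) * s ^ 2)) :=
    ((abs_mul_exp_integrable hb).const_mul _).add ((integrable_exp_neg_mul_sq hb).const_mul _)
  apply hdom.mono' (G_continuous z).aestronglyMeasurable
  filter_upwards with s
  have h1 : 0 ≤ hh s := hh_nonneg s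
  have h2 : hh s ≤ 2 * |s| + 2 := hh_le s
  rw [Real.norm_eq_abs, abs_of_nonneg (by positivity), exp_split]
  have h3 : Real.exp (-(z / 2) * s ^ 2) * Real.exp (-z) * hh s
      ≤ Real.exp (-(z / 2) * s ^ 2) * Real.exp (-z) * (2 * |s| + 2) := by
    gcongr
  calc Real.exp (-(z / 2) * s ^ 2) * Real.exp (-z) * hh s
      ≤ Real.exp (-(z / 2) * s ^ 2) * Real.exp (-z) * (2 * |s| + 2) := h3
    _ = 2 * Real.exp (-z) * (|s| * Real.exp (-(z / 2) * s ^ 2))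
        + 2 * Real.exp (-z) * Real.exp (-(z / 2) * s ^ 2) := by ring

lemma sq_mul_exp_integrable {b : ℝ} (hb : 0 < b) :
    Integrable (fun s : ℝ => s ^ 2 * Real.exp (-b * s ^ 2)) := by
  have h := integrable_rpow_mul_exp_neg_mul_sq hb (by norm_num : (-1 : ℝ) < 2)
  apply h.congr
  filter_upwards with s
  rw [show (2 : ℝ) = ((2 : ℕ) : ℝ) by norm_num, Real.rpow_natCast]

lemma integral_sq_mul_exp {b : ℝ} (hb : 0 < b) :
    ∫ s : ℝ, s ^ 2 * Real.exp (-b * s ^ 2) = b ^ (-(3 : ℝ) / 2) * Real.sqrt π / 2 := by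
  have h := integral_comp_abs (f := fun x : ℝ => x ^ 2 * Real.exp (-b * x ^ 2))
  simp_rw [sq_abs] at h
  rw [h]
  have h2 : ∫ x in Ioi (0 : ℝ), x ^ 2 * Real.exp (-b * x ^ 2)
      = b ^ (-((2 : ℝ) + 1) / 2) * (1 / 2) * Real.Gamma (((2 : ℝ) + 1) / 2) := by
    rw [← integral_rpow_mul_exp_neg_mul_rpow (p := 2) (q := 2) (by norm_num)
      (by norm_num) hb]
    apply setIntegral_congr_fun measurableSet_Ioi
    intro x hx
    simp only
    rw [show ((2 : ℝ)) = ((2 : ℕ) : ℝ) by norm_num, Real.rpow_natCast]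
  have hG : Real.Gamma (((2 : ℝ) + 1) / 2) = Real.sqrt π / 2 := by
    rw [show (((2 : ℝ) + 1) / 2) = 1 / 2 + 1 by norm_num,
      Real.Gamma_add_one (by norm_num), Real.Gamma_one_half_eq]
    ring
  rw [h2, hG, show (-((2 : ℝ) + 1) / 2) = -(3 : ℝ) / 2 by norm_num]
  ring

lemma final_eq {z : ℝ} (hz : 0 < z) :
    (1 / 4) * (2 * Real.exp (-z) * Real.sqrt (π / (z / 2))
      + (3 / 4) * Real.exp (-z) * ((z / 2) ^ (-(3 : ℝ) / 2) * Real.sqrt π / 2))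
    = Real.sqrt (π / (2 * z)) * Real.exp (-z) * (1 + 3 / (8 * z)) := by
  have e1 : Real.sqrt (π / (z / 2)) = 2 * Real.sqrt (π / (2 * z)) := by
    rw [show π / (z / 2) = 2 ^ 2 * (π / (2 * z)) by field_simp,
      Real.sqrt_mul (by norm_num : (0 : ℝ) ≤ 2 ^ 2), Real.sqrt_sq (by norm_num : (0 : ℝ) ≤ 2)]
  have e2 : (z / 2) ^ (-(3 : ℝ) / 2) = (2 / z) * Real.sqrt (2 / z) := by
    rw [show (-(3 : ℝ) / 2) = (-(3 / 2) : ℝ) by norm_num,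
      Real.rpow_neg (by positivity), ← Real.inv_rpow (by positivity), inv_div,
      show ((3 : ℝ) / 2) = 1 + 1 / 2 by norm_num,
      Real.rpow_add (by positivity), Real.rpow_one, ← Real.sqrt_eq_rpow]
  have e3 : Real.sqrt π * Real.sqrt (2 / z) = 2 * Real.sqrt (π / (2 * z)) := by
    rw [← Real.sqrt_mul pi_pos.le,
      show π * (2 / z) = 2 ^ 2 * (π / (2 * z)) by field_simp,
      Real.sqrt_mul (by norm_num : (0 : ℝ) ≤ 2 ^ 2), Real.sqrt_sq (by norm_num : (0 : ℝ) ≤ 2)]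
  rw [e1, e2]
  linear_combination (3 / (16 * z)) * Real.exp (-z) * e3

lemma main_bound (z : ℝ) (hz : 0 < z) :
    (1 / 2) * (∫ t in Ioi (0:ℝ), Real.exp (-(z / 2) * (t + 1 / t)))
      ≤ Real.sqrt (π / (2 * z)) * Real.exp (-z) * (1 + 3 / (8 * z)) := by
  have hb : 0 < z / 2 := by linarith
  set G : ℝ → ℝ := fun s => Real.exp (-(z / 2) * (s ^ 2 + 2)) * hh s with hGdef
  have step2 : (1 / 2) * (∫ t in Ioi (0:ℝ), Real.exp (-(z / 2) * (t + 1 / t)))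
      = (1 / 2) * ∫ s, G s := by rw [subst_eq z]
  have hGi : Integrable G := G_integrable hz
  have hGneg : Integrable (fun s => G (-s)) := hGi.comp_neg
  have step3 : ∫ s, G s = (1 / 2) * ∫ s, (G s + G (-s)) := by
    rw [integral_add hGi hGneg, integral_neg_eq_self]
    ring
  set B : ℝ → ℝ := fun s => 2 * Real.exp (-z) * Real.exp (-(z / 2) * s ^ 2)
      + (3 / 4) * Real.exp (-z) * (s ^ 2 * Real.exp (-(z / 2) * s ^ 2)) with hBdef
  have hBi : Integrable B := ((integrable_exp_neg_mul_sq hb).const_mul _).add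
      ((sq_mul_exp_integrable hb).const_mul _)
  have step4 : (∫ s, (G s + G (-s))) ≤ ∫ s, B s := by
    apply integral_mono (hGi.add hGneg) hBi
    intro s
    have key : G s + G (-s) = Real.exp (-(z / 2) * (s ^ 2 + 2)) * (hh s + hh (-s)) := by
      simp only [hGdef, neg_sq]
      ring
    show G s + G (-s) ≤ B s
    rw [key]
    calc Real.exp (-(z / 2) * (s ^ 2 + 2)) * (hh s + hh (-s))
        ≤ Real.exp (-(z / 2) * (s ^ 2 + 2)) * (2 + (3 / 4) * s ^ 2) :=
          mul_le_mul_of_nonneg_left (hh_add s) (Real.exp_pos _).le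
      _ = B s := by
          simp only [hBdef]
          rw [exp_split]
          ring
  have step5 : ∫ s, B s = 2 * Real.exp (-z) * Real.sqrt (π / (z / 2))
      + (3 / 4) * Real.exp (-z) * ((z / 2) ^ (-(3 : ℝ) / 2) * Real.sqrt π / 2) := by
    simp only [hBdef]
    rw [integral_add ((integrable_exp_neg_mul_sq hb).const_mul _)
        ((sq_mul_exp_integrable hb).const_mul _),
      MeasureTheory.integral_const_mul, MeasureTheory.integral_const_mul, integral_gaussian,
      integral_sq_mul_exp hb]
  calc (1 / 2) * (∫ t in Ioi (0:ℝ), Real.exp (-(z / 2) * (t + 1 / t)))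
      = (1 / 4) * ∫ s, (G s + G (-s)) := by rw [step2, step3]; ring
    _ ≤ (1 / 4) * ∫ s, B s := by linarith [step4]
    _ = (1 / 4) * (2 * Real.exp (-z) * Real.sqrt (π / (z / 2))
        + (3 / 4) * Real.exp (-z) * ((z / 2) ^ (-(3 : ℝ) / 2) * Real.sqrt π / 2)) := by
          rw [step5]
    _ = Real.sqrt (π / (2 * z)) * Real.exp (-z) * (1 + 3 / (8 * z)) := final_eq hz

end BesselAux

end Aux

theorem besselK_one_bound (z : ℝ) (hz : 0 < z) :
    besselK 1 z 0 ≤ Real.sqrt (π / (2 * z)) * Real.exp (-z) * (1 + 3 / (8 * z)) := by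
  have h : besselK 1 z 0
      = (1 / 2) * ∫ t in Set.Ioi (0:ℝ), Real.exp (-(z / 2) * (t + 1 / t)) := by
    unfold besselK
    simp only [sub_self, Real.rpow_zero, one_mul]
  rw [h]
  exact BesselAux.main_bound z hz
end

section
/- For z > 0, K_2(z) = (1/2)∫_0^∞ t · exp(−(z/2)(t + 1/t)) dt satisfies K_2(z) ≤ √(π/(2z)) e^{−z} (1 + 15/(8z) + 105/(128 z²)). -/
open Real

open MeasureTheory Set


noncomputable def KC (u : ℝ) : ℝ := Real.sqrt (u ^ 2 + 4)

noncomputable def KPsi (u : ℝ) : ℝ := ((u + KC u) / 2) ^ 2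

lemma KC_pos (u : ℝ) : 0 < KC u := Real.sqrt_pos.mpr (by positivity)

lemma KC_sq (u : ℝ) : KC u ^ 2 = u ^ 2 + 4 := Real.sq_sqrt (by positivity)

lemma KC_neg (u : ℝ) : KC (-u) = KC u := by unfold KC; ring_nf

lemma KC_add_pos (u : ℝ) : 0 < u + KC u := by
  rcases le_or_gt 0 u with h | h
  · have := KC_pos u; linarith
  · nlinarith [KC_sq u, KC_pos u]

lemma KPsi_pos (u : ℝ) : 0 < KPsi u := by
  have := KC_add_pos u; unfold KPsi; positivity

lemma KPsi_sqrt (u : ℝ) : Real.sqrt (KPsi u) = (u + KC u) / 2 := by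
  unfold KPsi
  exact Real.sqrt_sq (by have := KC_add_pos u; linarith)

lemma KPsi_mul (u : ℝ) : KPsi u * ((KC u - u) / 2) ^ 2 = 1 := by
  unfold KPsi
  have h := KC_sq u
  nlinarith [h]

lemma KPsi_inv (u : ℝ) : 1 / KPsi u = ((KC u - u) / 2) ^ 2 := by
  rw [div_eq_iff (ne_of_gt (KPsi_pos u))]
  rw [mul_comm] at *
  exact (KPsi_mul u).symm

lemma KPsi_add_inv (u : ℝ) : KPsi u + 1 / KPsi u = u ^ 2 + 2 := by
  rw [KPsi_inv]
  unfold KPsi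
  have h := KC_sq u
  nlinarith [h]

lemma KC_hasDerivAt (u : ℝ) : HasDerivAt KC (u / KC u) u := by
  have h1 : HasDerivAt (fun u : ℝ => u ^ 2 + 4) (2 * u) u := by
    simpa using ((hasDerivAt_pow 2 u).add_const 4)
  have h2 := (Real.hasDerivAt_sqrt (by positivity : u ^ 2 + 4 ≠ 0)).comp u h1
  refine h2.congr_deriv ?_
  unfold KC
  field_simp

lemma KPsi_hasDerivAt (u : ℝ) :
    HasDerivAt KPsi ((u + KC u) ^ 2 / (2 * KC u)) u := by
  have h1 : HasDerivAt (fun u : ℝ => (u + KC u) / 2) ((1 + u / KC u) / 2) u :=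
    ((hasDerivAt_id u).add (KC_hasDerivAt u)).div_const 2
  have h2 := (h1.pow 2)
  refine h2.congr_deriv ?_
  have hc := KC_pos u
  have hcs := KC_sq u
  field_simp
  ring

lemma KPsi_injective : Function.Injective KPsi := by
  have key : ∀ u, Real.sqrt (KPsi u) - 1 / Real.sqrt (KPsi u) = u := by
    intro u
    rw [KPsi_sqrt]
    have h : (u + KC u) / 2 * ((KC u - u) / 2) = 1 := by nlinarith [KC_sq u]
    have h2 : 1 / ((u + KC u) / 2) = (KC u - u) / 2 :=
      (div_eq_iff (by have := KC_add_pos u; positivity)).mpr (by linarith [h])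
    rw [h2]; ring
  intro a b hab
  rw [← key a, ← key b, hab]

lemma KPsi_image : KPsi '' Set.univ = Set.Ioi 0 := by
  ext t
  simp only [Set.image_univ, Set.mem_range, Set.mem_Ioi]
  constructor
  · rintro ⟨u, rfl⟩; exact KPsi_pos u
  · intro ht
    refine ⟨Real.sqrt t - 1 / Real.sqrt t, ?_⟩
    set s := Real.sqrt t with hs
    have hs0 : 0 < s := Real.sqrt_pos.mpr ht
    have hs2 : s ^ 2 = t := Real.sq_sqrt ht.le
    have harg : (s - 1 / s) ^ 2 + 4 = (s + 1 / s) ^ 2 := by field_simp; ring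
    have hKC : KC (s - 1 / s) = s + 1 / s := by
      unfold KC
      rw [harg]
      exact Real.sqrt_sq (by positivity)
    unfold KPsi
    rw [hKC]
    have : (s - 1 / s + (s + 1 / s)) / 2 = s := by ring
    rw [this, hs2]

lemma key_poly (u : ℝ) :
    (u ^ 4 + 4 * u ^ 2 + 2) / KC u ≤ 1 + 15 / 8 * u ^ 2 + 35 / 128 * u ^ 4 := by
  have hc := KC_pos u
  have hcs := KC_sq u
  rw [div_le_iff₀ hc]
  have hQ : 0 < 1 + 15 / 8 * u ^ 2 + 35 / 128 * u ^ 4 := by positivity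
  have hN : 0 ≤ u ^ 4 + 4 * u ^ 2 + 2 := by positivity
  have hsq : (u ^ 4 + 4 * u ^ 2 + 2) ^ 2 ≤
      ((1 + 15 / 8 * u ^ 2 + 35 / 128 * u ^ 4) * KC u) ^ 2 := by
    have : ((1 + 15 / 8 * u ^ 2 + 35 / 128 * u ^ 4) * KC u) ^ 2
        = (1 + 15 / 8 * u ^ 2 + 35 / 128 * u ^ 4) ^ 2 * (u ^ 2 + 4) := by
      rw [mul_pow, hcs]
    rw [this]
    nlinarith [sq_nonneg (u ^ 2), sq_nonneg (u ^ 3), sq_nonneg (u ^ 4), sq_nonneg (u ^ 5)]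
  have hQc : 0 ≤ (1 + 15 / 8 * u ^ 2 + 35 / 128 * u ^ 4) * KC u := by positivity
  exact (pow_le_pow_iff_left₀ hN hQc (by norm_num)).mp hsq

lemma moment_Ioi (b : ℝ) (hb : 0 < b) (k : ℕ) :
    ∫ u in Set.Ioi (0 : ℝ), u ^ k * Real.exp (-b * u ^ 2)
      = b ^ (-((k : ℝ) + 1) / 2) * (1 / 2) * Real.Gamma (((k : ℝ) + 1) / 2) := by
  have h := integral_rpow_mul_exp_neg_mul_rpow (p := 2) (q := (k : ℝ)) (b := b)
    (by norm_num) (lt_of_lt_of_le neg_one_lt_zero (Nat.cast_nonneg k)) hb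
  rw [← h]
  refine MeasureTheory.setIntegral_congr_fun measurableSet_Ioi (fun x hx => ?_)
  rw [Real.rpow_natCast, show ((2 : ℝ) = ((2 : ℕ) : ℝ)) by norm_num, Real.rpow_natCast]

lemma moment_even (b : ℝ) (hb : 0 < b) (k : ℕ) :
    ∫ u : ℝ, u ^ (2 * k) * Real.exp (-b * u ^ 2)
      = 2 * (b ^ (-(((2 * k : ℕ) : ℝ) + 1) / 2) * (1 / 2)
          * Real.Gamma ((((2 * k : ℕ) : ℝ) + 1) / 2)) := by
  have habs : ∀ u : ℝ, (|u| : ℝ) ^ (2 * k) * Real.exp (-b * |u| ^ 2)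
      = u ^ (2 * k) * Real.exp (-b * u ^ 2) := by
    intro u
    rw [pow_mul, sq_abs, ← pow_mul]
  calc ∫ u : ℝ, u ^ (2 * k) * Real.exp (-b * u ^ 2)
      = ∫ u : ℝ, |u| ^ (2 * k) * Real.exp (-b * |u| ^ 2) := by
        exact (MeasureTheory.integral_congr_ae (Filter.Eventually.of_forall
          (fun u => (habs u).symm)))
    _ = 2 * ∫ u in Set.Ioi (0 : ℝ), u ^ (2 * k) * Real.exp (-b * u ^ 2) :=
        integral_comp_abs (f := fun x => x ^ (2 * k) * Real.exp (-b * x ^ 2))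
    _ = _ := by
        rw [moment_Ioi b hb (2 * k)]

lemma gamma_three_half : Real.Gamma (3 / 2) = Real.sqrt π / 2 := by
  rw [show (3 / 2 : ℝ) = 1 / 2 + 1 by norm_num, Real.Gamma_add_one (by norm_num),
    Real.Gamma_one_half_eq]
  ring

lemma gamma_five_half : Real.Gamma (5 / 2) = 3 * Real.sqrt π / 4 := by
  rw [show (5 / 2 : ℝ) = 3 / 2 + 1 by norm_num, Real.Gamma_add_one (by norm_num),
    gamma_three_half]
  ring

lemma sqrt_mul_pow (b : ℝ) (hb : 0 < b) (n : ℕ) :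
    Real.sqrt b * b ^ n = b ^ ((n : ℝ) + 1 / 2) := by
  rw [Real.sqrt_eq_rpow, ← Real.rpow_natCast b n, ← Real.rpow_add hb]
  ring_nf

lemma rpowneg (b : ℝ) (hb : 0 < b) (n : ℕ) :
    b ^ (-((n : ℝ) + 1 / 2)) = 1 / (Real.sqrt b * b ^ n) := by
  rw [sqrt_mul_pow b hb n, Real.rpow_neg hb.le, one_div]
  norm_num

lemma m2 (b : ℝ) (hb : 0 < b) :
    ∫ u : ℝ, u ^ 2 * Real.exp (-b * u ^ 2) = Real.sqrt (π / b) / (2 * b) := by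
  have h := moment_even b hb 1
  norm_num at h
  simp only [neg_mul]
  rw [h, gamma_three_half, Real.sqrt_div Real.pi_pos.le,
    show (-(3 / 2) : ℝ) = -(((1 : ℕ) : ℝ) + 1 / 2) by norm_num, rpowneg b hb 1]
  have h1 : Real.sqrt b ≠ 0 := ne_of_gt (Real.sqrt_pos.mpr hb)
  field_simp

lemma m4 (b : ℝ) (hb : 0 < b) :
    ∫ u : ℝ, u ^ 4 * Real.exp (-b * u ^ 2) = 3 * Real.sqrt (π / b) / (4 * b ^ 2) := by
  have h := moment_even b hb 2
  norm_num at h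
  simp only [neg_mul]
  rw [h, gamma_five_half, Real.sqrt_div Real.pi_pos.le,
    show (-(5 / 2) : ℝ) = -(((2 : ℕ) : ℝ) + 1 / 2) by norm_num, rpowneg b hb 2]
  have h1 : Real.sqrt b ≠ 0 := ne_of_gt (Real.sqrt_pos.mpr hb)
  field_simp

theorem besselK_two_bound (z : ℝ) (hz : 0 < z) :
    besselK 2 z 0 ≤ Real.sqrt (π / (2 * z)) * Real.exp (-z) *
      (1 + 15 / (8 * z) + 105 / (128 * z ^ 2)) := by
  have hb : 0 < z / 2 := by linarith
  set G : ℝ → ℝ := fun u =>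
    (u + KC u) ^ 4 / (8 * KC u) * (Real.exp (-z) * Real.exp (-(z / 2) * u ^ 2)) with hG
  set Q : ℝ → ℝ := fun u =>
    Real.exp (-z) * ((1 + 15 / 8 * u ^ 2 + 35 / 128 * u ^ 4)
      * Real.exp (-(z / 2) * u ^ 2)) with hQ
  -- Step A: rewrite besselK
  have hA : besselK 2 z 0 =
      (1 / 2) * ∫ t in Set.Ioi (0 : ℝ), t * Real.exp (-(z / 2) * (t + 1 / t)) := by
    unfold besselK
    norm_num
  -- Step B: change of variables t = KPsi u
  have hB : (∫ t in Set.Ioi (0 : ℝ), t * Real.exp (-(z / 2) * (t + 1 / t)))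
      = ∫ u : ℝ, G u := by
    rw [← KPsi_image, integral_image_eq_integral_abs_deriv_smul MeasurableSet.univ
      (fun u _ => (KPsi_hasDerivAt u).hasDerivWithinAt) KPsi_injective.injOn
      (fun t => t * Real.exp (-(z / 2) * (t + 1 / t))), MeasureTheory.setIntegral_univ]
    refine integral_congr_ae (Filter.Eventually.of_forall fun u => ?_)
    have hc := KC_pos u
    have hca := KC_add_pos u
    have habs : |(u + KC u) ^ 2 / (2 * KC u)| = (u + KC u) ^ 2 / (2 * KC u) :=
      abs_of_pos (by positivity)
    simp only [smul_eq_mul, hG]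
    rw [habs]
    rw [show -(z / 2) * (KPsi u + 1 / KPsi u) = -(z / 2) * u ^ 2 + -z by
        rw [KPsi_add_inv]; ring, Real.exp_add]
    unfold KPsi
    field_simp
    ring
  -- integrability facts
  have hi0 : Integrable (fun u : ℝ => Real.exp (-(z / 2) * u ^ 2)) :=
    integrable_exp_neg_mul_sq hb
  have hi2 : Integrable (fun u : ℝ => u ^ 2 * Real.exp (-(z / 2) * u ^ 2)) := by
    have h := integrable_rpow_mul_exp_neg_mul_sq hb (s := 2) (by norm_num)
    refine h.congr (Filter.Eventually.of_forall fun u => ?_)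
    have : u ^ (2 : ℝ) = u ^ (2 : ℕ) := by
      rw [show ((2 : ℝ)) = ((2 : ℕ) : ℝ) by norm_num, Real.rpow_natCast]
    simp only [this]
  have hi4 : Integrable (fun u : ℝ => u ^ 4 * Real.exp (-(z / 2) * u ^ 2)) := by
    have h := integrable_rpow_mul_exp_neg_mul_sq hb (s := 4) (by norm_num)
    refine h.congr (Filter.Eventually.of_forall fun u => ?_)
    have : u ^ (4 : ℝ) = u ^ (4 : ℕ) := by
      rw [show ((4 : ℝ)) = ((4 : ℕ) : ℝ) by norm_num, Real.rpow_natCast]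
    simp only [this]
  have hiQ : Integrable Q := by
    rw [hQ]
    apply Integrable.const_mul
    have heq : (fun u : ℝ => (1 + 15 / 8 * u ^ 2 + 35 / 128 * u ^ 4)
        * Real.exp (-(z / 2) * u ^ 2))
        = fun u : ℝ => Real.exp (-(z / 2) * u ^ 2)
          + 15 / 8 * (u ^ 2 * Real.exp (-(z / 2) * u ^ 2))
          + 35 / 128 * (u ^ 4 * Real.exp (-(z / 2) * u ^ 2)) := by
      funext u; ring
    rw [heq]
    exact (hi0.add (hi2.const_mul _)).add (hi4.const_mul _)
  -- pointwise facts
  have hGnn : ∀ u, 0 ≤ G u := by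
    intro u
    have hc := KC_pos u
    have hca := KC_add_pos u
    rw [hG]
    positivity
  have hGsym : ∀ u, (G u + G (-u)) / 2 ≤ Q u := by
    intro u
    have hc := KC_pos u
    have hnum : (u + KC u) ^ 4 + (KC u - u) ^ 4 = 16 * (u ^ 4 + 4 * u ^ 2 + 2) := by
      linear_combination (2 * KC u ^ 2 + 14 * u ^ 2 + 8) * KC_sq u
    have hGneg : G (-u) = (KC u - u) ^ 4 / (8 * KC u)
        * (Real.exp (-z) * Real.exp (-(z / 2) * u ^ 2)) := by
      rw [hG]
      simp only [KC_neg, neg_sq]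
      ring_nf
    have hsum : (G u + G (-u)) / 2 = ((u ^ 4 + 4 * u ^ 2 + 2) / KC u)
        * (Real.exp (-z) * Real.exp (-(z / 2) * u ^ 2)) := by
      rw [hGneg, hG]
      simp only
      generalize Real.exp (-z) * Real.exp (-(z / 2) * u ^ 2) = E
      have expand : ((u + KC u) ^ 4 / (8 * KC u) * E + (KC u - u) ^ 4 / (8 * KC u) * E) / 2
          = (((u + KC u) ^ 4 + (KC u - u) ^ 4) / (16 * KC u)) * E := by ring
      rw [expand, hnum]
      have hcne := hc.ne'
      field_simp
    rw [hsum, hQ]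
    have hkey := key_poly u
    have hexp : 0 < Real.exp (-z) * Real.exp (-(z / 2) * u ^ 2) := by positivity
    calc (u ^ 4 + 4 * u ^ 2 + 2) / KC u * (Real.exp (-z) * Real.exp (-(z / 2) * u ^ 2))
        ≤ (1 + 15 / 8 * u ^ 2 + 35 / 128 * u ^ 4)
          * (Real.exp (-z) * Real.exp (-(z / 2) * u ^ 2)) := by
          exact mul_le_mul_of_nonneg_right hkey hexp.le
      _ = Real.exp (-z) * ((1 + 15 / 8 * u ^ 2 + 35 / 128 * u ^ 4)
          * Real.exp (-(z / 2) * u ^ 2)) := by ring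
  have hGle : ∀ u, G u ≤ 2 * Q u := by
    intro u
    have h1 := hGsym u
    have h2 := hGnn (-u)
    linarith
  have hiG : Integrable G := by
    have hcont : Continuous G := by
      rw [hG]
      have hKCc : Continuous KC := by
        unfold KC
        exact Real.continuous_sqrt.comp ((continuous_pow 2).add continuous_const)
      have h1 : Continuous fun u : ℝ => (u + KC u) ^ 4 := (continuous_id.add hKCc).pow 4
      have h2 : Continuous fun u : ℝ => 8 * KC u := continuous_const.mul hKCc
      have h3 : Continuous fun u : ℝ => Real.exp (-(z / 2) * u ^ 2) :=
        Real.continuous_exp.comp (continuous_const.mul (continuous_pow 2))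
      exact (h1.div h2 fun u => by have := KC_pos u; positivity).mul
        (continuous_const.mul h3)
    refine (hiQ.const_mul 2).mono' hcont.aestronglyMeasurable
      (Filter.Eventually.of_forall fun u => ?_)
    rw [Real.norm_eq_abs, abs_of_nonneg (hGnn u)]
    exact hGle u
  have hnegG : Integrable (fun u => G (-u)) := hiG.comp_neg
  -- symmetrize
  have hsymint : ∫ u : ℝ, G u = ∫ u : ℝ, (G u + G (-u)) / 2 := by
    have h1 : ∫ u : ℝ, (G u + G (-u)) / 2 = ((∫ u : ℝ, G u) + ∫ u : ℝ, G (-u)) / 2 := by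
      rw [← integral_add hiG hnegG, ← integral_div]
    rw [h1, integral_neg_eq_self]
    ring
  have hmono : (∫ u : ℝ, (G u + G (-u)) / 2) ≤ ∫ u : ℝ, Q u :=
    integral_mono_of_nonneg
      (Filter.Eventually.of_forall fun u => by
        have := hGnn u; have := hGnn (-u); positivity)
      hiQ (Filter.Eventually.of_forall hGsym)
  -- compute ∫ Q
  have hQval : ∫ u : ℝ, Q u = Real.exp (-z) * (Real.sqrt (π / (z / 2))
      * (1 + 15 / (8 * z) + 105 / (128 * z ^ 2))) := by
    rw [hQ]
    rw [integral_const_mul]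
    have heq : (fun u : ℝ => (1 + 15 / 8 * u ^ 2 + 35 / 128 * u ^ 4)
        * Real.exp (-(z / 2) * u ^ 2))
        = fun u : ℝ => Real.exp (-(z / 2) * u ^ 2)
          + 15 / 8 * (u ^ 2 * Real.exp (-(z / 2) * u ^ 2))
          + 35 / 128 * (u ^ 4 * Real.exp (-(z / 2) * u ^ 2)) := by
      funext u; ring
    have hi2' : Integrable (fun u : ℝ => 15 / 8 * (u ^ 2 * Real.exp (-(z / 2) * u ^ 2))) :=
      hi2.const_mul _
    have hi4' : Integrable (fun u : ℝ => 35 / 128 * (u ^ 4 * Real.exp (-(z / 2) * u ^ 2))) :=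
      hi4.const_mul _
    have hA2 : Integrable (fun u : ℝ => Real.exp (-(z / 2) * u ^ 2)
        + 15 / 8 * (u ^ 2 * Real.exp (-(z / 2) * u ^ 2))) := hi0.add hi2'
    rw [heq, integral_add hA2 hi4', integral_add hi0 hi2', integral_const_mul,
      integral_const_mul, integral_gaussian, m2 (z / 2) hb, m4 (z / 2) hb]
    have hzne : z ≠ 0 := ne_of_gt hz
    field_simp
    ring
  -- finish
  have hhalf : (1 / 2) * Real.sqrt (π / (z / 2)) = Real.sqrt (π / (2 * z)) := by
    have h1 : π / (z / 2) = 4 * (π / (2 * z)) := by field_simp; ring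
    rw [h1, Real.sqrt_mul (by norm_num : (0:ℝ) ≤ 4),
      show Real.sqrt 4 = 2 by
        rw [show (4 : ℝ) = 2 ^ 2 by norm_num, Real.sqrt_sq (by norm_num : (0:ℝ) ≤ 2)]]
    ring
  calc besselK 2 z 0 = (1 / 2) * ∫ u : ℝ, G u := by rw [hA, hB]
    _ = (1 / 2) * ∫ u : ℝ, (G u + G (-u)) / 2 := by rw [hsymint]
    _ ≤ (1 / 2) * ∫ u : ℝ, Q u := by linarith [hmono]
    _ = Real.sqrt (π / (2 * z)) * Real.exp (-z)
        * (1 + 15 / (8 * z) + 105 / (128 * z ^ 2)) := by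
        rw [hQval, ← hhalf]; ring
end

section
/- If ν ≤ 1, z > 0, and x > 1, then K_ν(z, x) < x^{ν+1}/(z(x² − 1)) · exp(−(z/2)(x + 1/x)). -/
open Set MeasureTheory Filter Topology

theorem besselK_lt_Q (ν z x : ℝ) (hν : ν ≤ 1) (hz : 0 < z) (hx : 1 < x) :
    besselK ν z x < x ^ (ν + 1) / (z * (x ^ 2 - 1)) * Real.exp (-(z / 2) * (x + 1 / x)) := by
  have hx0 : (0:ℝ) < x := lt_trans one_pos hx
  set E : ℝ → ℝ := fun t => Real.exp (-(z / 2) * (t + 1 / t)) with hEdef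
  set f : ℝ → ℝ := fun t => t ^ (ν - 1) * E t with hfdef
  set F' : ℝ → ℝ := fun t => z / 2 * (1 - 1 / t ^ 2) * E t with hF'def
  set F : ℝ → ℝ := fun t => -E t with hFdef
  set c : ℝ := 2 * x ^ (ν - 1) / (z * (1 - 1 / x ^ 2)) with hcdef
  have hrx : 0 < 1 - 1 / x ^ 2 := by
    have h1 : 1 / x ^ 2 < 1 := by
      rw [div_lt_one (by positivity)]; nlinarith
    linarith
  -- derivative of F
  have hderiv : ∀ t ∈ Ici x, HasDerivAt F (F' t) t := by
    intro t ht
    have ht1 : 1 < t := lt_of_lt_of_le hx ht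
    have ht0 : t ≠ 0 := by positivity
    have h1 : HasDerivAt (fun s : ℝ => s + 1 / s) (1 + -(t ^ 2)⁻¹) t := by
      simp only [one_div]
      exact (hasDerivAt_id t).add (hasDerivAt_inv ht0)
    have h2 : HasDerivAt (fun s : ℝ => -(z / 2) * (s + 1 / s))
        (-(z / 2) * (1 + -(t ^ 2)⁻¹)) t := h1.const_mul _
    have h3 := h2.exp
    have h4 := h3.neg
    refine h4.congr_deriv ?_
    simp only [hF'def, hEdef, one_div]
    ring
  -- limit of F at infinity
  have hlim : Tendsto F atTop (𝓝 0) := by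
    have h1 : Tendsto (fun t : ℝ => t + 1 / t) atTop atTop := by
      apply tendsto_atTop_add_right_of_le' _ 0 tendsto_id
      filter_upwards [eventually_gt_atTop (0:ℝ)] with t ht
      positivity
    have h2 : Tendsto (fun t : ℝ => -(z / 2) * (t + 1 / t)) atTop atBot :=
      (tendsto_const_mul_atBot_of_neg (by linarith)).2 h1
    have h3 : Tendsto E atTop (𝓝 0) := Real.tendsto_exp_atBot.comp h2
    simpa using h3.neg
  -- continuity on Ioi x
  have hcE : ContinuousOn E (Ioi x) := by
    apply Real.continuous_exp.comp_continuousOn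
    apply continuousOn_const.mul
    exact continuousOn_id.add (continuousOn_const.div continuousOn_id
      (fun t ht => ne_of_gt (lt_trans hx0 ht)))
  have hcF' : ContinuousOn F' (Ioi x) := by
    apply ContinuousOn.mul _ hcE
    apply continuousOn_const.mul
    exact continuousOn_const.sub (continuousOn_const.div (continuousOn_pow 2)
      (fun t ht => by have := lt_trans hx0 ht; positivity))
  have hcf : ContinuousOn f (Ioi x) := by
    apply ContinuousOn.mul _ hcE
    exact ContinuousOn.rpow_const continuousOn_id
      (fun t ht => Or.inl (ne_of_gt (lt_trans hx0 ht)))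
  -- pointwise exponential bound
  have hEbound : ∀ t, x < t → E t ≤ Real.exp (-(z / 2) * t) := by
    intro t ht
    apply Real.exp_le_exp.2
    have ht0 : 0 < t := lt_trans hx0 ht
    have : (0:ℝ) < 1 / t := by positivity
    nlinarith
  -- integrability of F'
  have hF'int : IntegrableOn F' (Ioi x) := by
    apply Integrable.mono' (g := fun t => z / 2 * Real.exp (-(z / 2) * t))
    · exact (exp_neg_integrableOn_Ioi x (by positivity : (0:ℝ) < z / 2)).const_mul _
    · exact hcF'.aestronglyMeasurable measurableSet_Ioi
    · filter_upwards [ae_restrict_mem measurableSet_Ioi] with t ht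
      have ht1 : 1 < t := lt_trans hx ht
      have hr : 0 ≤ 1 - 1 / t ^ 2 := by
        have : 1 / t ^ 2 ≤ 1 := by rw [div_le_one (by positivity)]; nlinarith
        linarith
      have hE0 : 0 < E t := Real.exp_pos _
      rw [Real.norm_eq_abs, abs_of_nonneg (by positivity)]
      have h1 : 1 - 1 / t ^ 2 ≤ 1 := by
        have : (0:ℝ) ≤ 1 / t ^ 2 := by positivity
        linarith
      calc z / 2 * (1 - 1 / t ^ 2) * E t ≤ z / 2 * 1 * E t := by
            apply mul_le_mul_of_nonneg_right _ hE0.le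
            apply mul_le_mul_of_nonneg_left h1 (by positivity)
        _ ≤ z / 2 * Real.exp (-(z / 2) * t) := by
            rw [mul_one]
            exact mul_le_mul_of_nonneg_left (hEbound t ht) (by positivity)
  -- integrability of f
  have hfint : IntegrableOn f (Ioi x) := by
    apply Integrable.mono' (g := fun t => Real.exp (-(z / 2) * t))
    · exact exp_neg_integrableOn_Ioi x (by positivity : (0:ℝ) < z / 2)
    · exact hcf.aestronglyMeasurable measurableSet_Ioi
    · filter_upwards [ae_restrict_mem measurableSet_Ioi] with t ht
      have ht1 : 1 < t := lt_trans hx ht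
      have hE0 : 0 < E t := Real.exp_pos _
      have hp : 0 < t ^ (ν - 1) := Real.rpow_pos_of_pos (by linarith) _
      rw [Real.norm_eq_abs, abs_of_nonneg (by positivity)]
      have h1 : t ^ (ν - 1) ≤ 1 :=
        Real.rpow_le_one_of_one_le_of_nonpos ht1.le (by linarith)
      calc t ^ (ν - 1) * E t ≤ 1 * E t := mul_le_mul_of_nonneg_right h1 hE0.le
        _ ≤ Real.exp (-(z / 2) * t) := by rw [one_mul]; exact hEbound t ht
  -- FTC
  have hFTC : ∫ t in Ioi x, F' t = E x := by
    rw [integral_Ioi_of_hasDerivAt_of_tendsto' hderiv hF'int hlim]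
    simp [hFdef]
  -- pointwise strict inequality
  have hpt : ∀ t ∈ Ioi x, f t < c * F' t := by
    intro t ht
    have ht1 : 1 < t := lt_trans hx ht
    have hE0 : 0 < E t := Real.exp_pos _
    have hxA : 0 < x ^ (ν - 1) := Real.rpow_pos_of_pos hx0 _
    have h1 : t ^ (ν - 1) ≤ x ^ (ν - 1) :=
      Real.rpow_le_rpow_of_nonpos hx0 (le_of_lt ht) (by linarith)
    have hrt : 1 - 1 / x ^ 2 < 1 - 1 / t ^ 2 := by
      have h2 : 1 / t ^ 2 < 1 / x ^ 2 := by
        apply one_div_lt_one_div_of_lt (by positivity)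
        nlinarith [mul_pos (sub_pos.2 (mem_Ioi.1 ht)) (by linarith : (0:ℝ) < t + x)]
      linarith
    have hgen : ∀ A u v e : ℝ, u ≠ 0 → 2 * A / (z * u) * (z / 2 * v * e) = A * (v / u) * e := by
      intro A u v e hu
      field_simp
    have hkey : c * F' t = x ^ (ν - 1) * ((1 - 1 / t ^ 2) / (1 - 1 / x ^ 2)) * E t := by
      simp only [hcdef, hF'def]
      exact hgen _ _ _ _ (ne_of_gt hrx)
    have hr1 : 1 < (1 - 1 / t ^ 2) / (1 - 1 / x ^ 2) := (one_lt_div hrx).2 hrt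
    calc f t = t ^ (ν - 1) * E t := rfl
      _ ≤ x ^ (ν - 1) * E t := mul_le_mul_of_nonneg_right h1 hE0.le
      _ < x ^ (ν - 1) * ((1 - 1 / t ^ 2) / (1 - 1 / x ^ 2)) * E t := by
          nlinarith [mul_pos hxA hE0]
      _ = c * F' t := hkey.symm
  -- strict integral inequality
  have hcint : IntegrableOn (fun t => c * F' t) (Ioi x) := hF'int.const_mul c
  have hlt : ∫ t in Ioi x, f t < ∫ t in Ioi x, c * F' t := by
    have hdiff : 0 < ∫ t in Ioi x, (c * F' t - f t) := by
      rw [setIntegral_pos_iff_support_of_nonneg_ae]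
      · have hsub : Ioi x ⊆ Function.support (fun t => c * F' t - f t) ∩ Ioi x := by
          intro t ht
          exact ⟨ne_of_gt (sub_pos.2 (hpt t ht)), ht⟩
        calc (0:ENNReal) < volume (Ioi x) := by simp [Real.volume_Ioi]
          _ ≤ _ := measure_mono hsub
      · filter_upwards [ae_restrict_mem measurableSet_Ioi] with t ht
        exact le_of_lt (sub_pos.2 (hpt t ht))
      · exact hcint.sub hfint
    rw [integral_sub hcint hfint] at hdiff
    linarith
  have hval : ∫ t in Ioi x, c * F' t = c * E x := by
    rw [integral_const_mul, hFTC]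
  -- conclude
  have hfinal : (1 / 2 : ℝ) * (c * E x) =
      x ^ (ν + 1) / (z * (x ^ 2 - 1)) * E x := by
    have hpow : x ^ (ν + 1) = x ^ (ν - 1) * x ^ 2 := by
      rw [← Real.rpow_natCast x 2, ← Real.rpow_add hx0]
      congr 1
      ring
    rw [hpow, hcdef]
    have hx2 : x ^ 2 - 1 ≠ 0 := by nlinarith
    field_simp
  calc besselK ν z x = (1/2 : ℝ) * ∫ t in Ioi x, f t := rfl
    _ < (1/2 : ℝ) * (c * E x) := by
        rw [← hval]
        linarith [hlt]
    _ = _ := hfinal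
end

section
/- For z > 0 and x > 1, K_2(z, x) < (x + 2/z) · x²/(z(x² − 1)) · exp(−(z/2)(x + 1/x)). -/
open MeasureTheory Filter Set Real

-- derivative lemma
lemma aux_deriv (z t : ℝ) (hz : 0 < z) (ht : 1 < t) :
    HasDerivAt (fun s => (2*s^3 + (4/z)*s^2) / (z*(s^2-1)) * Real.exp (-(z/2)*(s+1/s)))
      (-((t + (2/z)*(t^2+(4/z)*t+1)/(t^2-1)^2) * Real.exp (-(z/2)*(t+1/t)))) t := by
  have ht0 : t ≠ 0 := by positivity
  have hden : t^2 - 1 ≠ 0 := by nlinarith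
  have hz' : z ≠ 0 := ne_of_gt hz
  have hden' : z*(t^2-1) ≠ 0 := mul_ne_zero hz' hden
  have h1 : HasDerivAt (fun s : ℝ => 2*s^3 + (4/z)*s^2) (2*(3*t^2) + (4/z)*(2*t)) t := by
    have := ((hasDerivAt_pow 3 t).const_mul 2).add ((hasDerivAt_pow 2 t).const_mul (4/z))
    simpa [Pi.add_def] using this
  have h2 : HasDerivAt (fun s : ℝ => z*(s^2-1)) (z*(2*t)) t := by
    have := ((hasDerivAt_pow 2 t).sub_const 1).const_mul z
    simpa using this
  have hg : HasDerivAt (fun s : ℝ => (2*s^3 + (4/z)*s^2) / (z*(s^2-1)))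
      (((2*(3*t^2) + (4/z)*(2*t)) * (z*(t^2-1)) - (2*t^3 + (4/z)*t^2) * (z*(2*t))) / (z*(t^2-1))^2) t :=
    h1.div h2 hden'
  have hu : HasDerivAt (fun s : ℝ => -(z/2)*(s+1/s)) (-(z/2)*(1 + (-(t^2)⁻¹))) t := by
    have h3 : HasDerivAt (fun s : ℝ => s + 1/s) (1 + (-(t^2)⁻¹)) t := by
      simpa [one_div, Pi.add_def] using (hasDerivAt_id t).add (hasDerivAt_inv ht0)
    simpa using h3.const_mul (-(z/2))
  have hφ : HasDerivAt (fun s : ℝ => Real.exp (-(z/2)*(s+1/s)))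
      (Real.exp (-(z/2)*(t+1/t)) * (-(z/2)*(1 + (-(t^2)⁻¹)))) t := (Real.hasDerivAt_exp _).comp t hu
  have := hg.mul hφ
  refine this.congr_deriv ?_
  field_simp
  ring

lemma aux_tendsto (z : ℝ) (hz : 0 < z) :
    Tendsto (fun t : ℝ => (2*t^3 + (4/z)*t^2) / (z*(t^2-1)) * Real.exp (-(z/2)*(t+1/t)))
      atTop (nhds 0) := by
  set C : ℝ := (2 + 4/z) * (4/(3*z)) with hC
  have hC0 : 0 ≤ C := by positivity
  apply squeeze_zero' (g := fun t : ℝ => C * (t * Real.exp (-(z/2*t))))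
  · filter_upwards [eventually_ge_atTop (2:ℝ)] with t ht
    have h1 : (0:ℝ) < t^2 - 1 := by nlinarith
    positivity
  · filter_upwards [eventually_ge_atTop (2:ℝ)] with t ht
    have ht0 : 0 < t := by linarith
    have h1 : (0:ℝ) < t^2 - 1 := by nlinarith
    have hexp : Real.exp (-(z/2)*(t+1/t)) ≤ Real.exp (-(z/2*t)) := by
      apply Real.exp_le_exp.2
      have : 0 ≤ 1/t := by positivity
      nlinarith
    have hg : (2*t^3 + (4/z)*t^2) / (z*(t^2-1)) ≤ C * t := by
      rw [div_le_iff₀ (by positivity)]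
      have h2 : t^2 ≤ t^3 := by nlinarith
      have h3 : (3:ℝ)/4 * t^2 ≤ t^2 - 1 := by nlinarith
      have : C * t * (z*(t^2-1)) ≥ C * t * (z * (3/4*t^2)) := by
        apply mul_le_mul_of_nonneg_left _ (by positivity)
        apply mul_le_mul_of_nonneg_left h3 (le_of_lt hz)
      have h4 : C * t * (z * (3/4*t^2)) = (2 + 4/z) * t^3 := by
        field_simp [hC]; rw [hC]; field_simp
      nlinarith [mul_le_mul_of_nonneg_left h2 (by positivity : (0:ℝ) ≤ 4/z)]
    calc (2*t^3 + (4/z)*t^2) / (z*(t^2-1)) * Real.exp (-(z/2)*(t+1/t))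
        ≤ (C * t) * Real.exp (-(z/2*t)) := by
          apply mul_le_mul hg hexp (le_of_lt (Real.exp_pos _))
          positivity
      _ = C * (t * Real.exp (-(z/2*t))) := by ring
  · have h0 : Tendsto (fun u : ℝ => u * Real.exp (-u)) atTop (nhds 0) := by
      simpa using Real.tendsto_pow_mul_exp_neg_atTop_nhds_zero 1
    have h1 : Tendsto (fun t : ℝ => z/2 * t) atTop atTop :=
      tendsto_id.const_mul_atTop (by positivity)
    have h2 : Tendsto (fun t : ℝ => (z/2*t) * Real.exp (-(z/2*t))) atTop (nhds 0) := h0.comp h1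
    have h3 := h2.const_mul (2/z * C)
    simp only [mul_zero] at h3
    convert h3 using 2 with t
    field_simp

theorem besselK_two_lt (z x : ℝ) (hz : 0 < z) (hx : 1 < x) :
    besselK 2 z x < (x + 2 / z) * x ^ 2 / (z * (x ^ 2 - 1)) *
      Real.exp (-(z / 2) * (x + 1 / x)) := by
  have hx0 : 0 < x := lt_trans one_pos hx
  have hz' : z ≠ 0 := ne_of_gt hz
  set φ : ℝ → ℝ := fun t => Real.exp (-(z/2)*(t+1/t)) with hφ
  set F : ℝ → ℝ := fun t => (2*t^3 + (4/z)*t^2) / (z*(t^2-1)) * φ t with hF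
  set G : ℝ → ℝ := fun t => (t + (2/z)*(t^2+(4/z)*t+1)/(t^2-1)^2) * φ t with hG
  have hderiv : ∀ t ∈ Ioi x, HasDerivAt (fun s => -(F s)) (G t) t := fun t ht => by
    have := (aux_deriv z t hz (lt_trans hx ht)).neg
    simpa [hF, hG, hφ, Pi.neg_def] using this
  have hGpos : ∀ t ∈ Ioi x, 0 < G t := fun t ht => by
    have ht1 : 1 < t := lt_trans hx ht
    have h1 : (0:ℝ) < t^2-1 := by nlinarith
    have h2 : 0 < t + (2/z)*(t^2+(4/z)*t+1)/(t^2-1)^2 := by positivity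
    exact mul_pos h2 (Real.exp_pos _)
  have hcont : ContinuousWithinAt (fun s => -(F s)) (Ici x) x :=
    ((aux_deriv z x hz hx).neg.continuousAt).continuousWithinAt
  have htend : Tendsto (fun s => -(F s)) atTop (nhds 0) := by
    have h := (aux_tendsto z hz).neg
    rw [neg_zero] at h
    exact h
  have hint : IntegrableOn G (Ioi x) :=
    integrableOn_Ioi_deriv_of_nonneg hcont hderiv (fun t ht => (hGpos t ht).le) htend
  have hIG : ∫ t in Ioi x, G t = F x := by
    have := integral_Ioi_of_hasDerivAt_of_nonneg hcont hderiv (fun t ht => (hGpos t ht).le) htend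
    simpa using this
  -- the integrand of besselK
  have hφc : ContinuousOn φ (Ioi x) := by
    apply Real.continuous_exp.comp_continuousOn
    apply ContinuousOn.mul continuousOn_const
    exact continuousOn_id.add (continuousOn_const.div continuousOn_id
      (fun t ht => ne_of_gt (lt_trans hx0 ht)))
  have hfm : AEStronglyMeasurable (fun t => t * φ t) (volume.restrict (Ioi x)) :=
    (continuousOn_id.mul hφc).aestronglyMeasurable measurableSet_Ioi
  have hfleG : ∀ t ∈ Ioi x, t * φ t ≤ G t := fun t ht => by
    have ht1 : 1 < t := lt_trans hx ht
    have h1 : (0:ℝ) < t^2-1 := by nlinarith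
    have h2 : 0 ≤ (2/z)*(t^2+(4/z)*t+1)/(t^2-1)^2 := by positivity
    have : t ≤ t + (2/z)*(t^2+(4/z)*t+1)/(t^2-1)^2 := by linarith
    exact mul_le_mul_of_nonneg_right this (Real.exp_pos _).le
  have hf_int : IntegrableOn (fun t => t * φ t) (Ioi x) := by
    apply hint.mono' hfm
    rw [ae_restrict_iff' measurableSet_Ioi]
    filter_upwards with t ht
    have ht1 : 1 < t := lt_trans hx ht
    have : 0 ≤ t * φ t := mul_pos (by linarith) (Real.exp_pos _) |>.le
    rw [Real.norm_eq_abs, abs_of_nonneg this]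
    exact hfleG t ht
  have hh_int : IntegrableOn (fun t => G t - t * φ t) (Ioi x) := hint.sub hf_int
  have hh_pos : 0 < ∫ t in Ioi x, (G t - t * φ t) := by
    rw [setIntegral_pos_iff_support_of_nonneg_ae _ hh_int]
    · have hsub : Ioi x ⊆ Function.support (fun t => G t - t * φ t) ∩ Ioi x := by
        intro t ht
        refine ⟨?_, ht⟩
        have ht1 : 1 < t := lt_trans hx ht
        have h1 : (0:ℝ) < t^2-1 := by nlinarith
        have h2 : 0 < (2/z)*(t^2+(4/z)*t+1)/(t^2-1)^2 := by positivity
        have : G t - t * φ t = ((2/z)*(t^2+(4/z)*t+1)/(t^2-1)^2) * φ t := by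
          simp only [hG]; ring
        simp only [Function.mem_support, this]
        exact ne_of_gt (mul_pos h2 (Real.exp_pos _))
      calc (0:ENNReal) < volume (Ioi x) := by simp [Real.volume_Ioi]
        _ ≤ _ := measure_mono hsub
    · rw [EventuallyLE, ae_restrict_iff' measurableSet_Ioi]
      filter_upwards with t ht
      have := hfleG t ht
      simpa using this
  have hIf : ∫ t in Ioi x, t * φ t < F x := by
    have hsplit : ∫ t in Ioi x, (G t - t * φ t) =
        (∫ t in Ioi x, G t) - ∫ t in Ioi x, t * φ t := integral_sub hint hf_int
    rw [hsplit, hIG] at hh_pos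
    linarith
  have hbk : besselK 2 z x = (1/2) * ∫ t in Ioi x, t * φ t := by
    unfold besselK
    norm_num [hφ]
  rw [hbk]
  have hRHS : (x + 2 / z) * x ^ 2 / (z * (x ^ 2 - 1)) * Real.exp (-(z / 2) * (x + 1 / x))
      = (1/2) * F x := by
    have h1 : x^2 - 1 ≠ 0 := by nlinarith
    simp only [hF, hφ]
    field_simp
    ring
  rw [hRHS]
  linarith
end

section
/- For every x > 0, ψ(x) − ϑ(x) ≤ ψ(x^{1/2}) + ψ(x^{1/3}) + ψ(x^{1/5}), and ψ(x) − ϑ(x) ≥ ψ(x^{1/2}) + ψ(x^{1/3}) + ψ(x^{1/7}). -/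
open Finset ArithmeticFunction

noncomputable def chebyshevPsi (x : ℝ) : ℝ := ∑ n ∈ Finset.Icc 1 ⌊x⌋₊, Λ n

noncomputable def chebyshevTheta (x : ℝ) : ℝ :=
  ∑ p ∈ (Finset.Icc 1 ⌊x⌋₊).filter Nat.Prime, Real.log p

noncomputable def primePi (x : ℝ) : ℝ :=
  ((Finset.Icc 1 ⌊x⌋₊).filter Nat.Prime).card

/- ### Auxiliary lemmas -/

lemma theta_nonneg' (y : ℝ) : 0 ≤ chebyshevTheta y := by
  apply Finset.sum_nonneg
  intro p hp
  simp only [Finset.mem_filter, Finset.mem_Icc] at hp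
  exact Real.log_nonneg (by exact_mod_cast hp.1.1)

lemma theta_mono' {a b : ℝ} (h : a ≤ b) : chebyshevTheta a ≤ chebyshevTheta b := by
  apply Finset.sum_le_sum_of_subset_of_nonneg
  · exact Finset.filter_subset_filter _ (Finset.Icc_subset_Icc_right (Nat.floor_mono h))
  · intro p hp _
    simp only [Finset.mem_filter, Finset.mem_Icc] at hp
    exact Real.log_nonneg (by exact_mod_cast hp.1.1)

lemma theta_eq_zero' {y : ℝ} (h : y < 2) : chebyshevTheta y = 0 := by
  have h1 : ⌊y⌋₊ ≤ 1 := by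
    by_contra hc
    push_neg at hc
    have : (2 : ℕ) ≤ ⌊y⌋₊ := hc
    have h2 := (Nat.le_floor_iff (le_trans (by norm_num) ((Nat.le_floor_iff ?_).mp this))).mp this
    · norm_num at h2; linarith
    · by_contra hy
      push_neg at hy
      rw [Nat.floor_eq_zero.mpr (by linarith)] at hc
      omega
  have : (Finset.Icc 1 ⌊y⌋₊).filter Nat.Prime = ∅ := by
    ext p
    simp only [Finset.mem_filter, Finset.mem_Icc, Finset.notMem_empty, iff_false, not_and]
    rintro ⟨hp1, hp2⟩ hp
    have := hp.two_le
    omega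
  rw [chebyshevTheta, this, Finset.sum_empty]

lemma le_floor_rpow_iff {y : ℝ} (hy : 0 ≤ y) {k p : ℕ} (hk : k ≠ 0) :
    p ≤ ⌊y ^ ((k : ℝ))⁻¹⌋₊ ↔ p ^ k ≤ ⌊y⌋₊ := by
  rw [Nat.le_floor_iff (Real.rpow_nonneg hy _), Nat.le_floor_iff hy]
  push_cast
  constructor
  · intro h
    calc (p : ℝ) ^ k ≤ (y ^ ((k : ℝ))⁻¹) ^ k := pow_le_pow_left₀ (by positivity) h k
      _ = y := Real.rpow_inv_natCast_pow hy hk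
  · intro h
    have h2 := Real.rpow_le_rpow (by positivity) h (by positivity : (0:ℝ) ≤ ((k:ℝ))⁻¹)
    rwa [Real.pow_rpow_inv_natCast (by positivity) hk] at h2

lemma psi_eq_sum_theta {y : ℝ} (hy : 0 ≤ y) {K : ℕ} (hK : ⌊y⌋₊ < 2 ^ K) :
    chebyshevPsi y = ∑ k ∈ Finset.Icc 1 K, chebyshevTheta (y ^ ((k : ℝ))⁻¹) := by
  unfold chebyshevPsi chebyshevTheta
  simp only [vonMangoldt_apply]
  rw [← Finset.sum_filter, Finset.sum_sigma']
  refine Finset.sum_nbij' (fun n => ⟨n.factorization n.minFac, n.minFac⟩)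
    (fun kp => kp.2 ^ kp.1) ?_ ?_ ?_ ?_ ?_
  · intro n hn
    simp only [Finset.mem_filter, Finset.mem_Icc] at hn
    obtain ⟨⟨hn1, hn2⟩, hpp⟩ := hn
    have hne1 : n ≠ 1 := by have := hpp.two_le; omega
    have hp : n.minFac.Prime := Nat.minFac_prime hne1
    have hk0 : n.factorization n.minFac ≠ 0 := Nat.factorization_minFac_ne_zero hpp.one_lt
    have heq : n.minFac ^ n.factorization n.minFac = n := hpp.minFac_pow_factorization_eq
    have h2k : 2 ^ n.factorization n.minFac ≤ n := by
      calc 2 ^ n.factorization n.minFac ≤ n.minFac ^ n.factorization n.minFac :=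
        Nat.pow_le_pow_left hp.two_le _
        _ = n := heq
    have hkK : n.factorization n.minFac ≤ K := by
      by_contra hc
      push_neg at hc
      have : 2 ^ K ≤ 2 ^ n.factorization n.minFac := Nat.pow_le_pow_right (by norm_num) (by omega)
      omega
    simp only [Finset.mem_sigma, Finset.mem_filter, Finset.mem_Icc]
    refine ⟨⟨by omega, hkK⟩, ⟨hp.pos, ?_⟩, hp⟩
    rw [le_floor_rpow_iff hy hk0, heq]
    exact hn2
  · rintro ⟨k, p⟩ hkp
    simp only [Finset.mem_sigma, Finset.mem_filter, Finset.mem_Icc] at hkp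
    obtain ⟨⟨hk1, hkK⟩, ⟨hp1, hp2⟩, hpp⟩ := hkp
    simp only [Finset.mem_filter, Finset.mem_Icc]
    have hk0 : k ≠ 0 := by omega
    refine ⟨⟨Nat.one_le_pow _ _ hpp.pos, ?_⟩, ⟨p, k, hpp.prime, by omega, rfl⟩⟩
    exact (le_floor_rpow_iff hy hk0).mp hp2
  · intro n hn
    simp only [Finset.mem_filter, Finset.mem_Icc] at hn
    exact hn.2.minFac_pow_factorization_eq
  · rintro ⟨k, p⟩ hkp
    simp only [Finset.mem_sigma, Finset.mem_filter, Finset.mem_Icc] at hkp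
    obtain ⟨⟨hk1, hkK⟩, ⟨hp1, hp2⟩, hpp⟩ := hkp
    have hk0 : k ≠ 0 := by omega
    have h1 : (p ^ k).minFac = p := hpp.pow_minFac hk0
    have h2 : (p ^ k).factorization = Finsupp.single p k := hpp.factorization_pow
    simp only [h1, h2, Finsupp.single_eq_same]
  · intro n hn
    simp only [Finset.mem_filter, Finset.mem_Icc] at hn
    simp [hn.2.minFac_pow_factorization_eq]

lemma telescope' (f : ℕ → ℝ) : ∀ (a b : ℕ), a ≤ b + 1 →
    ∑ n ∈ Finset.Icc a b, (f n - f (n + 1)) = f a - f (b + 1) := by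
  intro a b
  induction b with
  | zero =>
    intro h
    interval_cases a
    · simp
    · simp
  | succ b ih =>
    intro h
    rcases Nat.lt_or_ge a (b + 2) with h' | h'
    · rw [Finset.sum_Icc_succ_top (by omega), ih (by omega)]
      ring
    · have ha : a = b + 2 := by omega
      subst ha
      rw [Finset.Icc_eq_empty (by omega), Finset.sum_empty]
      ring

lemma sum_T_eq (T : ℕ → ℝ) (M : ℕ) (hT : T (M + 1) = 0) (S : Finset ℕ)
    (hS : ∀ j ∈ S, 1 ≤ j ∧ j ≤ M) :
    ∑ j ∈ S, T j
      = ∑ n ∈ Finset.Icc 1 M, ((S.filter (fun j => j ≤ n)).card : ℝ) * (T n - T (n + 1)) := by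
  have key : ∀ j ∈ S, T j = ∑ n ∈ Finset.Icc 1 M, if j ≤ n then T n - T (n + 1) else 0 := by
    intro j hj
    obtain ⟨hj1, hjM⟩ := hS j hj
    have hIcc : (Finset.Icc 1 M).filter (fun n => j ≤ n) = Finset.Icc j M := by
      ext n
      simp only [Finset.mem_filter, Finset.mem_Icc]
      omega
    rw [← Finset.sum_filter, hIcc, telescope' T j M (by omega), hT, sub_zero]
  rw [Finset.sum_congr rfl key, Finset.sum_comm]
  refine Finset.sum_congr rfl fun n _ => ?_
  rw [← Finset.sum_filter, Finset.sum_const, nsmul_eq_mul]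

lemma card_filter_mul (N d n : ℕ) (hd : 0 < d) :
    ((Finset.Icc 1 N).filter (fun k => d * k ≤ n)).card = min N (n / d) := by
  have h : (Finset.Icc 1 N).filter (fun k => d * k ≤ n) = Finset.Icc 1 (min N (n / d)) := by
    ext k
    simp only [Finset.mem_filter, Finset.mem_Icc, le_min_iff]
    rw [Nat.le_div_iff_mul_le hd, mul_comm]
    tauto
  rw [h, Nat.card_Icc, Nat.add_sub_cancel]

lemma sum_mul_T (T : ℕ → ℝ) {N M d : ℕ} (hd : 1 ≤ d) (hdM : d * N ≤ M) (hM : T (M + 1) = 0) :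
    ∑ k ∈ Finset.Icc 1 N, T (d * k)
      = ∑ n ∈ Finset.Icc 1 M, ((min N (n / d) : ℕ) : ℝ) * (T n - T (n + 1)) := by
  have hinj : ∀ x ∈ Finset.Icc 1 N, ∀ y ∈ Finset.Icc 1 N, d * x = d * y → x = y := by
    intro x _ y _ h
    exact Nat.eq_of_mul_eq_mul_left hd h
  have himg := Finset.sum_image (s := Finset.Icc 1 N) (g := fun k => d * k) (f := T) hinj
  rw [← himg, sum_T_eq T M hM _ ?_]
  · refine Finset.sum_congr rfl fun n _ => ?_
    congr 2
    rw [Finset.filter_image, Finset.card_image_of_injOn, card_filter_mul N d n hd]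
    intro x _ y _ h
    exact Nat.eq_of_mul_eq_mul_left hd h
  · intro j hj
    simp only [Finset.mem_image, Finset.mem_Icc] at hj
    obtain ⟨k, ⟨hk1, hk2⟩, rfl⟩ := hj
    have : d * k ≤ d * N := Nat.mul_le_mul_left d hk2
    constructor <;> nlinarith

lemma sum_T_Icc2 (T : ℕ → ℝ) {N M : ℕ} (hNM : N ≤ M) (hM : T (M + 1) = 0) :
    ∑ m ∈ Finset.Icc 2 N, T m
      = ∑ n ∈ Finset.Icc 1 M, ((min N n - 1 : ℕ) : ℝ) * (T n - T (n + 1)) := by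
  rw [sum_T_eq T M hM _ (fun j hj => by simp only [Finset.mem_Icc] at hj; omega)]
  refine Finset.sum_congr rfl fun n _ => ?_
  congr 2
  have h : (Finset.Icc 2 N).filter (fun j => j ≤ n) = Finset.Icc 2 (min N n) := by
    ext j
    simp only [Finset.mem_filter, Finset.mem_Icc, le_min_iff]
    omega
  rw [h, Nat.card_Icc]
  omega

theorem psi_sub_theta_bounds (x : ℝ) (hx : 0 < x) :
    chebyshevPsi x - chebyshevTheta x ≤
      chebyshevPsi (x ^ ((1 : ℝ) / 2)) + chebyshevPsi (x ^ ((1 : ℝ) / 3)) +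
        chebyshevPsi (x ^ ((1 : ℝ) / 5)) ∧
    chebyshevPsi (x ^ ((1 : ℝ) / 2)) + chebyshevPsi (x ^ ((1 : ℝ) / 3)) +
        chebyshevPsi (x ^ ((1 : ℝ) / 7)) ≤ chebyshevPsi x - chebyshevTheta x := by
  rcases lt_or_ge x 1 with hx1 | hx1
  · have hpsi0 : ∀ y : ℝ, y < 1 → chebyshevPsi y = 0 := by
      intro y hy
      unfold chebyshevPsi
      rw [Nat.floor_eq_zero.mpr hy]
      simp
    have hθ0 : chebyshevTheta x = 0 := theta_eq_zero' (by linarith)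
    have hr : ∀ d : ℝ, 0 < d → x ^ ((1 : ℝ) / d) < 1 :=
      fun d hd => Real.rpow_lt_one hx.le hx1 (by positivity)
    rw [hpsi0 x hx1, hθ0, hpsi0 _ (hr 2 (by norm_num)), hpsi0 _ (hr 3 (by norm_num)),
      hpsi0 _ (hr 5 (by norm_num)), hpsi0 _ (hr 7 (by norm_num))]
    norm_num
  · have hx0 : (0 : ℝ) ≤ x := by linarith
    set N : ℕ := ⌊x⌋₊ + 1 with hNdef
    set M : ℕ := 7 * N with hMdef
    set T : ℕ → ℝ := fun m => chebyshevTheta (x ^ ((m : ℝ))⁻¹) with hTdef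
    have hNpow : ⌊x⌋₊ < 2 ^ N :=
      lt_of_lt_of_le (Nat.lt_two_pow_self (n := _)) (Nat.pow_le_pow_right (by norm_num) (by omega))
    have hTz : ∀ m : ℕ, N ≤ m → T m = 0 := by
      intro m hm
      have hm0 : m ≠ 0 := by omega
      have hlt : x < (2 : ℝ) ^ m := by
        have h1 : x < (⌊x⌋₊ : ℝ) + 1 := Nat.lt_floor_add_one x
        have h2 : (N : ℝ) ≤ (m : ℝ) := by exact_mod_cast hm
        have h3 : (m : ℝ) < 2 ^ m := by exact_mod_cast Nat.lt_two_pow_self (n := m)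
        have h4 : ((⌊x⌋₊ + 1 : ℕ) : ℝ) = (⌊x⌋₊ : ℝ) + 1 := by push_cast; ring
        rw [hNdef] at h2
        rw [h4] at h2
        linarith
      have h4 : x ^ ((m : ℝ))⁻¹ < ((2 : ℝ) ^ m) ^ ((m : ℝ))⁻¹ :=
        Real.rpow_lt_rpow hx0 hlt (by positivity)
      rw [Real.pow_rpow_inv_natCast (by norm_num) hm0] at h4
      exact theta_eq_zero' h4
    have hTM : T (M + 1) = 0 := hTz _ (by omega)
    have hD : ∀ n : ℕ, 1 ≤ n → 0 ≤ T n - T (n + 1) := by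
      intro n hn
      have hexp : x ^ (((n + 1 : ℕ) : ℝ))⁻¹ ≤ x ^ ((n : ℝ))⁻¹ := by
        apply Real.rpow_le_rpow_of_exponent_le hx1
        have h1 : (0 : ℝ) < (n : ℝ) := by exact_mod_cast hn
        rw [inv_le_inv₀ (by push_cast; linarith) h1]
        push_cast; linarith
      exact sub_nonneg.mpr (theta_mono' hexp)
    have hT1 : T 1 = chebyshevTheta x := by
      simp only [hTdef, Nat.cast_one, inv_one, Real.rpow_one]
    have hpsix : chebyshevPsi x - chebyshevTheta x = ∑ m ∈ Finset.Icc 2 N, T m := by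
      rw [psi_eq_sum_theta hx0 hNpow]
      have hins : Finset.Icc 1 N = insert 1 (Finset.Icc 2 N) := by
        ext m; simp only [Finset.mem_insert, Finset.mem_Icc]; omega
      rw [hins, Finset.sum_insert (by simp)]
      rw [show chebyshevTheta (x ^ (((1 : ℕ) : ℝ))⁻¹) = T 1 from rfl, hT1]
      ring
    have hpsid : ∀ d : ℕ, 1 ≤ d →
        chebyshevPsi (x ^ ((d : ℝ))⁻¹) = ∑ k ∈ Finset.Icc 1 N, T (d * k) := by
      intro d hd
      have hd0 : (0 : ℝ) < (d : ℝ) := by exact_mod_cast hd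
      have hyd : (0 : ℝ) ≤ x ^ ((d : ℝ))⁻¹ := Real.rpow_nonneg hx0 _
      have hyle : x ^ ((d : ℝ))⁻¹ ≤ x := by
        calc x ^ ((d : ℝ))⁻¹ ≤ x ^ (1 : ℝ) := by
              apply Real.rpow_le_rpow_of_exponent_le hx1
              rw [inv_le_one_iff₀]
              right; exact_mod_cast hd
          _ = x := Real.rpow_one x
      have hfl : ⌊x ^ ((d : ℝ))⁻¹⌋₊ < 2 ^ N := lt_of_le_of_lt (Nat.floor_mono hyle) hNpow
      rw [psi_eq_sum_theta hyd hfl]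
      refine Finset.sum_congr rfl fun k hk => ?_
      simp only [hTdef]
      congr 1
      rw [← Real.rpow_mul hx0]
      congr 1
      push_cast
      exact (mul_inv _ _).symm
    have e2 : x ^ ((1 : ℝ) / 2) = x ^ (((2 : ℕ) : ℝ))⁻¹ := by norm_num
    have e3 : x ^ ((1 : ℝ) / 3) = x ^ (((3 : ℕ) : ℝ))⁻¹ := by norm_num
    have e5 : x ^ ((1 : ℝ) / 5) = x ^ (((5 : ℕ) : ℝ))⁻¹ := by norm_num
    have e7 : x ^ ((1 : ℝ) / 7) = x ^ (((7 : ℕ) : ℝ))⁻¹ := by norm_num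
    constructor
    · rw [hpsix, e2, e3, e5, hpsid 2 (by norm_num), hpsid 3 (by norm_num),
        hpsid 5 (by norm_num)]
      rw [sum_T_Icc2 T (show N ≤ M by omega) hTM,
        sum_mul_T T (by norm_num) (show 2 * N ≤ M by omega) hTM,
        sum_mul_T T (by norm_num) (show 3 * N ≤ M by omega) hTM,
        sum_mul_T T (by norm_num) (show 5 * N ≤ M by omega) hTM,
        ← Finset.sum_add_distrib, ← Finset.sum_add_distrib]
      refine Finset.sum_le_sum fun n hn => ?_
      simp only [Finset.mem_Icc] at hn
      have hDn := hD n hn.1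
      have hnat : min N n - 1 ≤ min N (n / 2) + min N (n / 3) + min N (n / 5) := by omega
      have hcast : ((min N n - 1 : ℕ) : ℝ)
          ≤ ((min N (n / 2) : ℕ) : ℝ) + ((min N (n / 3) : ℕ) : ℝ) + ((min N (n / 5) : ℕ) : ℝ) := by
        exact_mod_cast hnat
      calc ((min N n - 1 : ℕ) : ℝ) * (T n - T (n + 1))
          ≤ (((min N (n / 2) : ℕ) : ℝ) + ((min N (n / 3) : ℕ) : ℝ) + ((min N (n / 5) : ℕ) : ℝ))
            * (T n - T (n + 1)) := mul_le_mul_of_nonneg_right hcast hDn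
        _ = ((min N (n / 2) : ℕ) : ℝ) * (T n - T (n + 1))
            + ((min N (n / 3) : ℕ) : ℝ) * (T n - T (n + 1))
            + ((min N (n / 5) : ℕ) : ℝ) * (T n - T (n + 1)) := by ring
    · rw [hpsix, e2, e3, e7, hpsid 2 (by norm_num), hpsid 3 (by norm_num),
        hpsid 7 (by norm_num)]
      rw [sum_T_Icc2 T (show N ≤ M by omega) hTM,
        sum_mul_T T (by norm_num) (show 2 * N ≤ M by omega) hTM,
        sum_mul_T T (by norm_num) (show 3 * N ≤ M by omega) hTM,
        sum_mul_T T (by norm_num) (show 7 * N ≤ M by omega) hTM,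
        ← Finset.sum_add_distrib, ← Finset.sum_add_distrib]
      refine Finset.sum_le_sum fun n hn => ?_
      simp only [Finset.mem_Icc] at hn
      rcases Nat.lt_or_ge n N with hnN | hnN
      · have hDn := hD n hn.1
        have hnat : min N (n / 2) + min N (n / 3) + min N (n / 7) ≤ min N n - 1 := by omega
        have hcast : ((min N (n / 2) : ℕ) : ℝ) + ((min N (n / 3) : ℕ) : ℝ)
            + ((min N (n / 7) : ℕ) : ℝ) ≤ ((min N n - 1 : ℕ) : ℝ) := by exact_mod_cast hnat
        calc ((min N (n / 2) : ℕ) : ℝ) * (T n - T (n + 1))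
            + ((min N (n / 3) : ℕ) : ℝ) * (T n - T (n + 1))
            + ((min N (n / 7) : ℕ) : ℝ) * (T n - T (n + 1))
            = (((min N (n / 2) : ℕ) : ℝ) + ((min N (n / 3) : ℕ) : ℝ)
              + ((min N (n / 7) : ℕ) : ℝ)) * (T n - T (n + 1)) := by ring
          _ ≤ ((min N n - 1 : ℕ) : ℝ) * (T n - T (n + 1)) :=
            mul_le_mul_of_nonneg_right hcast hDn
      · have hz1 : T n = 0 := hTz n hnN
        have hz2 : T (n + 1) = 0 := hTz (n + 1) (by omega)
        rw [hz1, hz2]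
        simp
end
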